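/- arXiv:1812.10669 — 7 statements merged into one kernel-verified Lean document; each statement's English description precedes it below -/
import Mathlib

section
/- Let X be a real Banach space. Then X is fully Mazur if and only if S₁(Y) = X* for every norming and norm-closed subspace Y ⊆ X*, i.e., if and only if every element of X* is the weak-star limit of some sequence contained in Y, for every norming and norm-closed subspace Y ⊆ X*. -/
set_option synthInstance.maxHeartbeats 1000000
set_option maxHeartbeats 1000000


open Filter Topology

noncomputable section

variable (X : Type*) [NormedAddCommGroup X] [NormedSpace ℝ X]

/-- The dual norm of an element of the weak-star dual. -/
def dnorm (y : WeakDual ℝ X) : ℝ := ‖WeakDual.toStrongDual y‖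

/-- A subspace `Y ⊆ X*` is norming if there is `c > 0` with
`c·‖x‖ ≤ sup {y x : y ∈ Y, ‖y‖ ≤ 1}` for every `x ∈ X`. -/
def IsNorming (Y : Submodule ℝ (WeakDual ℝ X)) : Prop :=
  ∃ c > 0, ∀ x : X, c * ‖x‖ ≤ sSup {r : ℝ | ∃ y ∈ Y, dnorm X y ≤ 1 ∧ r = y x}

/-- `Y` is closed for the dual norm topology of `X*`. -/
def NormClosed (Y : Submodule ℝ (WeakDual ℝ X)) : Prop :=
  IsClosed ((fun y => WeakDual.toStrongDual y) '' (Y : Set (WeakDual ℝ X)))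

/-- A linear functional on `Y ⊆ X*` is weak-star sequentially continuous. -/
def WStarSeqCont {Y : Submodule ℝ (WeakDual ℝ X)} (f : Y →ₗ[ℝ] ℝ) : Prop :=
  ∀ (u : ℕ → Y) (y : Y),
    Tendsto (fun n => (u n : WeakDual ℝ X)) atTop (𝓝 (y : WeakDual ℝ X)) →
      Tendsto (fun n => f (u n)) atTop (𝓝 (f y))

/-- `(Y, w*)` has the Mazur property: every weak-star sequentially continuous
linear functional on `Y` is weak-star continuous. -/
def MazurProp (Y : Submodule ℝ (WeakDual ℝ X)) : Prop :=
  ∀ f : Y →ₗ[ℝ] ℝ, WStarSeqCont X f → Continuous f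

/-- `X` is fully Mazur. -/
def FullyMazur : Prop :=
  ∀ Y : Submodule ℝ (WeakDual ℝ X), IsNorming X Y → NormClosed X Y → MazurProp X Y

/-- The Grothendieck condition on a linear functional `f : Y → ℝ`: the restriction of `f`
to every absolutely convex weak-star compact subset of `Y` is weak-star continuous. -/
def GrothendieckCond {Y : Submodule ℝ (WeakDual ℝ X)} (f : Y →ₗ[ℝ] ℝ) : Prop :=
  ∀ K : Set (WeakDual ℝ X), K ⊆ (Y : Set (WeakDual ℝ X)) → Convex ℝ K → Balanced ℝ K →
    IsCompact K → ContinuousOn (fun y : Y => f y) (Subtype.val ⁻¹' K)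

/-- Completeness of the Mackey space `(X, μ(X,Y))`, via Grothendieck's criterion. -/
def MackeyComplete (Y : Submodule ℝ (WeakDual ℝ X)) : Prop :=
  ∀ f : Y →ₗ[ℝ] ℝ, GrothendieckCond X f → Continuous f

/-- `X` is fully Mackey complete. -/
def FullyMackeyComplete : Prop :=
  ∀ Y : Submodule ℝ (WeakDual ℝ X), IsNorming X Y → NormClosed X Y → MackeyComplete X Y

/-- `S₁(A)`: the set of weak-star limits of sequences contained in `A`. -/
def S1 (A : Set (WeakDual ℝ X)) : Set (WeakDual ℝ X) :=
  {z | ∃ u : ℕ → WeakDual ℝ X, (∀ n, u n ∈ A) ∧ Tendsto u atTop (𝓝 z)}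

end

section Aux
variable {X : Type*} [NormedAddCommGroup X] [NormedSpace ℝ X]

lemma wstar_tendsto_iff {u : ℕ → WeakDual ℝ X} {z : WeakDual ℝ X} :
    Tendsto u atTop (𝓝 z) ↔ ∀ x : X, Tendsto (fun n => u n x) atTop (𝓝 (z x)) :=
  tendsto_iff_forall_eval_tendsto_topDualPairing

lemma eval_abs_le (y : WeakDual ℝ X) (x : X) : |y x| ≤ dnorm X y * ‖x‖ :=
  (WeakDual.toStrongDual y).le_opNorm x

lemma dnorm_nonneg (y : WeakDual ℝ X) : 0 ≤ dnorm X y := norm_nonneg _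

/-- the norming set -/
def nset (Y : Submodule ℝ (WeakDual ℝ X)) (x : X) : Set ℝ :=
  {r : ℝ | ∃ y ∈ Y, dnorm X y ≤ 1 ∧ r = y x}

lemma zero_mem_nset (Y : Submodule ℝ (WeakDual ℝ X)) (x : X) : (0 : ℝ) ∈ nset Y x :=
  ⟨0, Y.zero_mem, by simp [dnorm], rfl⟩

lemma nset_bddAbove (Y : Submodule ℝ (WeakDual ℝ X)) (x : X) : BddAbove (nset Y x) := by
  refine ⟨‖x‖, fun r hr => ?_⟩
  obtain ⟨y, -, hy1, rfl⟩ := hr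
  calc y x ≤ |y x| := le_abs_self _
    _ ≤ dnorm X y * ‖x‖ := eval_abs_le y x
    _ ≤ 1 * ‖x‖ := by gcongr
    _ = ‖x‖ := one_mul _

lemma neg_mem_nset {Y : Submodule ℝ (WeakDual ℝ X)} {x : X} {y : WeakDual ℝ X}
    (hy : y ∈ Y) (h1 : dnorm X y ≤ 1) : -(y x) ∈ nset Y x :=
  ⟨-y, Y.neg_mem hy, by simpa [dnorm, norm_neg] using h1, rfl⟩

lemma abs_le_sSup_nset {Y : Submodule ℝ (WeakDual ℝ X)} {x : X} {y : WeakDual ℝ X}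
    (hy : y ∈ Y) (h1 : dnorm X y ≤ 1) : |y x| ≤ sSup (nset Y x) := by
  rcases abs_cases (y x) with ⟨h, -⟩ | ⟨h, -⟩
  · rw [h]; exact le_csSup (nset_bddAbove Y x) ⟨y, hy, h1, rfl⟩
  · rw [h]; exact le_csSup (nset_bddAbove Y x) (neg_mem_nset hy h1)

lemma norming_eq_zero {Y : Submodule ℝ (WeakDual ℝ X)} (hY : IsNorming X Y) {x : X}
    (h : ∀ y ∈ Y, y x = 0) : x = 0 := by
  obtain ⟨c, hc, hY⟩ := hY
  have hsub : nset Y x ⊆ {0} := by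
    rintro r ⟨y, hy, -, rfl⟩; exact h y hy
  have : sSup (nset Y x) = 0 := le_antisymm
    (csSup_le ⟨0, zero_mem_nset Y x⟩ fun r hr => le_of_eq (hsub hr))
    (le_csSup (nset_bddAbove Y x) (zero_mem_nset Y x))
  have h2 := (hY x).trans_eq this
  have hx : ‖x‖ ≤ 0 := by nlinarith [norm_nonneg x]
  exact norm_le_zero_iff.mp hx

lemma norming_mono {Y Y' : Submodule ℝ (WeakDual ℝ X)} (h : Y ≤ Y') (hY : IsNorming X Y) :
    IsNorming X Y' := by
  obtain ⟨c, hc, hY⟩ := hY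
  refine ⟨c, hc, fun x => (hY x).trans (csSup_le_csSup (nset_bddAbove Y' x)
    ⟨0, zero_mem_nset Y x⟩ ?_)⟩
  rintro r ⟨y, hy, h1, rfl⟩; exact ⟨y, h hy, h1, rfl⟩

/-- S1 contains the set. -/
lemma subset_S1 (A : Set (WeakDual ℝ X)) : A ⊆ S1 X A := fun z hz =>
  ⟨fun _ => z, fun _ => hz, tendsto_const_nhds⟩

/-- S1 of a submodule is closed under `w ↦ a • (w - y₀)` for `y₀ ∈ Y`. -/
lemma S1_smul_sub {Y : Submodule ℝ (WeakDual ℝ X)} {w y₀ : WeakDual ℝ X}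
    (hw : w ∈ S1 X (Y : Set (WeakDual ℝ X))) (hy₀ : y₀ ∈ Y) (a : ℝ) :
    a • (w - y₀) ∈ S1 X (Y : Set (WeakDual ℝ X)) := by
  obtain ⟨u, hu, hconv⟩ := hw
  refine ⟨fun n => a • (u n - y₀), fun n => Y.smul_mem a (Y.sub_mem (hu n) hy₀), ?_⟩
  rw [wstar_tendsto_iff] at hconv ⊢
  intro x
  have h1 : (fun n => (a • (u n - y₀)) x) = fun n => a * (u n x - y₀ x) := rfl
  have hz : (a • (w - y₀)) x = a * (w x - y₀ x) := rfl
  rw [h1, hz]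
  exact (((hconv x).sub tendsto_const_nhds)).const_mul a

end Aux

section Closed
variable {E : Type*} [NormedAddCommGroup E] [NormedSpace ℝ E]

lemma isClosed_sup_span {M : Submodule ℝ E} (hM : IsClosed (M : Set E)) {z : E} (hz : z ∉ M) :
    IsClosed ((M ⊔ (ℝ ∙ z) : Submodule ℝ E) : Set E) := by
  have hδ : 0 < Metric.infDist z M :=
    (hM.notMem_iff_infDist_pos ⟨0, M.zero_mem⟩).mp hz
  set δ := Metric.infDist z (M : Set E) with hδdef
  have key : ∀ y ∈ M, ∀ t : ℝ, |t| * δ ≤ ‖y + t • z‖ := by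
    intro y hy t
    rcases eq_or_ne t 0 with rfl | ht
    · simpa using norm_nonneg (y + (0:ℝ) • z)
    · have h1 : δ ≤ dist z (-(t⁻¹ • y)) :=
        Metric.infDist_le_dist_of_mem (M.neg_mem (M.smul_mem _ hy))
      have h2 : dist z (-(t⁻¹ • y)) = |t|⁻¹ * ‖y + t • z‖ := by
        rw [dist_eq_norm, sub_neg_eq_add, ← abs_inv, ← Real.norm_eq_abs, ← norm_smul]
        congr 1
        rw [smul_add, smul_smul, inv_mul_cancel₀ ht, one_smul]
        abel
      rw [h2] at h1
      calc |t| * δ ≤ |t| * (|t|⁻¹ * ‖y + t • z‖) := by gcongr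
        _ = ‖y + t • z‖ := by
            rw [← mul_assoc, mul_inv_cancel₀ (abs_ne_zero.mpr ht), one_mul]
  refine IsSeqClosed.isClosed ?_
  intro u w hu huw
  have hdec : ∀ n, ∃ y ∈ M, ∃ t : ℝ, u n = y + t • z := by
    intro n
    obtain ⟨y, hy, s, hs, hsum⟩ := Submodule.mem_sup.mp (hu n)
    obtain ⟨t, rfl⟩ := Submodule.mem_span_singleton.mp hs
    exact ⟨y, hy, t, hsum.symm⟩
  choose y hy t hyt using hdec
  obtain ⟨C, hC⟩ : ∃ C, ∀ n, ‖u n‖ ≤ C := by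
    obtain ⟨C, hC⟩ := huw.norm.bddAbove_range
    exact ⟨C, fun n => hC ⟨n, rfl⟩⟩
  have htb : ∀ n, t n ∈ Set.Icc (-(C/δ)) (C/δ) := by
    intro n
    have h1 : |t n| * δ ≤ ‖u n‖ := by rw [hyt n]; exact key (y n) (hy n) (t n)
    have habs : |t n| ≤ C / δ := by
      rw [le_div_iff₀ hδ]; exact h1.trans (hC n)
    exact Set.mem_Icc.mpr (abs_le.mp habs)
  obtain ⟨a, -, φ, hφ, hta⟩ := tendsto_subseq_of_bounded (Metric.isBounded_Icc _ _) htb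
  have hyconv : Tendsto (fun k => u (φ k) - t (φ k) • z) atTop (𝓝 (w - a • z)) :=
    (huw.comp hφ.tendsto_atTop).sub (hta.smul_const z)
  have hmem : w - a • z ∈ M := by
    have := hM.mem_of_tendsto hyconv (Filter.Eventually.of_forall fun k => by
      rw [hyt (φ k)]
      simpa using hy (φ k))
    exact this
  have hw : w = (w - a • z) + a • z := by abel
  rw [SetLike.mem_coe, hw]
  exact Submodule.add_mem _ (Submodule.mem_sup_left hmem)
    (Submodule.mem_sup_right (Submodule.mem_span_singleton.mpr ⟨a, rfl⟩))

end Closed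

section Forward
variable {X : Type*} [NormedAddCommGroup X] [NormedSpace ℝ X]

set_option maxHeartbeats 1000000 in
theorem forward [CompleteSpace X] (hFM : FullyMazur X) (Y : Submodule ℝ (WeakDual ℝ X))
    (hn : IsNorming X Y) (hcl : NormClosed X Y) :
    S1 X (Y : Set (WeakDual ℝ X)) = Set.univ := by
  by_contra hne
  obtain ⟨z, hz⟩ : ∃ z, z ∉ S1 X (Y : Set (WeakDual ℝ X)) := by
    by_contra h; push_neg at h; exact hne (Set.eq_univ_of_forall h)
  have hzY : z ∉ Y := fun h => hz (subset_S1 _ h)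
  set Y₀ : Submodule ℝ (WeakDual ℝ X) := Y ⊔ (ℝ ∙ z) with hY₀def
  have hn₀ : IsNorming X Y₀ := norming_mono le_sup_left hn
  have hmapeq : ∀ W : Submodule ℝ (WeakDual ℝ X),
      ((fun y => WeakDual.toStrongDual y) '' (W : Set (WeakDual ℝ X)))
        = ((Submodule.map ((WeakDual.toStrongDual (𝕜 := ℝ) (E := X)) : WeakDual ℝ X →ₗ[ℝ] StrongDual ℝ X) W : Submodule ℝ (StrongDual ℝ X)) : Set (StrongDual ℝ X)) := by
    intro W; rw [Submodule.map_coe]; rfl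
  have hcl₀ : NormClosed X Y₀ := by
    unfold NormClosed
    rw [hmapeq, hY₀def, Submodule.map_sup, Submodule.map_span, Set.image_singleton]
    refine isClosed_sup_span ?_ ?_
    · rw [← hmapeq]; exact hcl
    · intro hmem
      obtain ⟨y, hy, hey⟩ := Submodule.mem_map.mp hmem
      exact hzY (by rwa [(WeakDual.toStrongDual.injective (by exact hey) : y = z)] at hy)
  -- the functional
  have hzs : ∀ t : ℝ, t ≠ 0 → t • z ∉ Y := by
    intro t ht hmem
    exact hzY (by simpa [smul_smul, inv_mul_cancel₀ ht] using Y.smul_mem t⁻¹ hmem)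
  have hex : ∀ w : Y₀, ∃ t : ℝ, (w : WeakDual ℝ X) - t • z ∈ Y := by
    intro w
    obtain ⟨y, hy, s, hs, hsum⟩ := Submodule.mem_sup.mp w.2
    obtain ⟨t, rfl⟩ := Submodule.mem_span_singleton.mp hs
    exact ⟨t, by rw [← hsum]; simpa using hy⟩
  have huniq : ∀ (w : Y₀) (t₁ t₂ : ℝ), (w : WeakDual ℝ X) - t₁ • z ∈ Y →
      (w : WeakDual ℝ X) - t₂ • z ∈ Y → t₁ = t₂ := by
    intro w t₁ t₂ h1 h2
    by_contra hne'
    have h3 : (t₁ - t₂) • z ∈ Y := by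
      have h4 := Y.sub_mem h2 h1
      rw [sub_sub_sub_cancel_left, ← sub_smul] at h4
      exact h4
    exact hzs _ (sub_ne_zero.mpr hne') h3
  set T : Y₀ → ℝ := fun w => (hex w).choose with hTdef
  have hT : ∀ w : Y₀, (w : WeakDual ℝ X) - T w • z ∈ Y := fun w => (hex w).choose_spec
  have hTu : ∀ (w : Y₀) (t : ℝ), (w : WeakDual ℝ X) - t • z ∈ Y → T w = t :=
    fun w t h => huniq w (T w) t (hT w) h
  set f : Y₀ →ₗ[ℝ] ℝ :=
    { toFun := T
      map_add' := by
        intro w₁ w₂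
        refine hTu (w₁ + w₂) (T w₁ + T w₂) ?_
        have heq : ((w₁ + w₂ : Y₀) : WeakDual ℝ X) - (T w₁ + T w₂) • z
            = ((w₁ : WeakDual ℝ X) - T w₁ • z) + ((w₂ : WeakDual ℝ X) - T w₂ • z) := by
          rw [Submodule.coe_add, add_smul]; abel
        rw [heq]; exact Y.add_mem (hT w₁) (hT w₂)
      map_smul' := by
        intro a w
        simp only [RingHom.id_apply, smul_eq_mul]
        refine hTu (a • w) (a * T w) ?_
        have heq : ((a • w : Y₀) : WeakDual ℝ X) - (a * T w) • z
            = a • ((w : WeakDual ℝ X) - T w • z) := by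
          rw [Submodule.coe_smul, smul_sub, smul_smul]
        rw [heq]; exact Y.smul_mem a (hT w) } with hfdef
  have hfT : ∀ w : Y₀, f w = T w := fun _ => rfl
  -- sequential continuity
  have hseq : WStarSeqCont X f := by
    intro u y hconv
    have hpt : ∀ x : X, ∃ C, ∀ n,
        ‖(WeakDual.toStrongDual ((u n : WeakDual ℝ X))) x‖ ≤ C := by
      intro x
      have h1 : Tendsto (fun n => (u n : WeakDual ℝ X) x) atTop (𝓝 ((y : WeakDual ℝ X) x)) :=
        (wstar_tendsto_iff.mp hconv) x
      obtain ⟨C, hC⟩ := h1.norm.bddAbove_range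
      exact ⟨C, fun n => hC ⟨n, rfl⟩⟩
    obtain ⟨C₀, hC₀⟩ := banach_steinhaus hpt
    have hdb : ∀ n, dnorm X (u n : WeakDual ℝ X) ≤ C₀ := fun n => hC₀ n
    set t : ℕ → ℝ := fun n => T (u n) with htdef
    obtain ⟨C₁, hC₁⟩ : ∃ C₁, ∀ n, |t n| ≤ C₁ := by
      by_contra hun
      push_neg at hun
      choose φ hφ using fun k : ℕ => hun ((k : ℝ) + 1)
      refine hz ?_
      have hpos : ∀ k : ℕ, (0 : ℝ) < (k : ℝ) + 1 := fun k => by positivity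
      have hne0 : ∀ k, t (φ k) ≠ 0 := by
        intro k h0
        have h5 := hφ k
        rw [h0, abs_zero] at h5
        exact absurd h5 (not_lt.mpr (hpos k).le)
      refine ⟨fun k => (-(t (φ k))⁻¹) • ((u (φ k) : WeakDual ℝ X) - t (φ k) • z),
        fun k => Y.smul_mem _ (hT (u (φ k))), ?_⟩
      rw [wstar_tendsto_iff]
      intro x
      have hval : (fun k => ((-(t (φ k))⁻¹) • ((u (φ k) : WeakDual ℝ X) - t (φ k) • z)) x)
          = fun k => z x - (t (φ k))⁻¹ * (u (φ k) : WeakDual ℝ X) x := by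
        funext k
        have h2 : ((-(t (φ k))⁻¹) • ((u (φ k) : WeakDual ℝ X) - t (φ k) • z)) x
            = (-(t (φ k))⁻¹) * ((u (φ k) : WeakDual ℝ X) x - t (φ k) * z x) := rfl
        rw [h2, neg_mul, mul_sub, inv_mul_cancel_left₀ (hne0 k), neg_sub]
      rw [hval]
      have hz0 : Tendsto (fun k => (t (φ k))⁻¹ * (u (φ k) : WeakDual ℝ X) x) atTop (𝓝 0) := by
        have htend : Tendsto (fun k : ℕ => (1 / ((k : ℝ) + 1)) * (C₀ * ‖x‖)) atTop (𝓝 0) := by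
          simpa using tendsto_one_div_add_atTop_nhds_zero_nat.mul_const (C₀ * ‖x‖)
        refine squeeze_zero_norm (fun k => ?_) htend
        · 
          have h3 : |(u (φ k) : WeakDual ℝ X) x| ≤ C₀ * ‖x‖ :=
            (eval_abs_le _ x).trans (mul_le_mul_of_nonneg_right (hdb (φ k)) (norm_nonneg x))
          have h5 : |(t (φ k))⁻¹| ≤ 1 / ((k : ℝ) + 1) := by
            rw [abs_inv, one_div]
            exact inv_anti₀ (hpos k) (hφ k).le
          calc ‖(t (φ k))⁻¹ * (u (φ k) : WeakDual ℝ X) x‖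
              = |(t (φ k))⁻¹| * |(u (φ k) : WeakDual ℝ X) x| := abs_mul _ _
            _ ≤ (1 / ((k : ℝ) + 1)) * (C₀ * ‖x‖) :=
                mul_le_mul h5 h3 (abs_nonneg _) (by positivity)
      simpa using tendsto_const_nhds.sub hz0
    -- convergence of t to T y
    have hmain : Tendsto t atTop (𝓝 (T y)) := by
      apply tendsto_of_subseq_tendsto
      intro ns hns
      obtain ⟨a, -, ψ, hψ, hta⟩ := tendsto_subseq_of_bounded (Metric.isBounded_Icc (-C₁) C₁)
        (x := fun k => t (ns k)) (fun k => Set.mem_Icc.mpr (abs_le.mp (hC₁ (ns k))))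
      refine ⟨ψ, ?_⟩
      have huconv : Tendsto (fun k => (u (ns (ψ k)) : WeakDual ℝ X)) atTop
          (𝓝 (y : WeakDual ℝ X)) := hconv.comp (hns.comp hψ.tendsto_atTop)
      have hyS : (y : WeakDual ℝ X) - a • z ∈ S1 X (Y : Set (WeakDual ℝ X)) := by
        refine ⟨fun k => (u (ns (ψ k)) : WeakDual ℝ X) - t (ns (ψ k)) • z,
          fun k => hT _, ?_⟩
        rw [wstar_tendsto_iff]
        intro x
        have hfe : (fun k => ((u (ns (ψ k)) : WeakDual ℝ X) - t (ns (ψ k)) • z) x)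
            = fun k => (u (ns (ψ k)) : WeakDual ℝ X) x - t (ns (ψ k)) * z x := rfl
        have hge : ((y : WeakDual ℝ X) - a • z) x = (y : WeakDual ℝ X) x - a * z x := rfl
        rw [hfe, hge]
        exact (wstar_tendsto_iff.mp huconv x).sub (hta.mul_const (z x))
      have ha : a = T y := by
        by_contra hne'
        have h1 := S1_smul_sub hyS (hT y) (T y - a)⁻¹
        have h2 : (T y - a)⁻¹ • (((y : WeakDual ℝ X) - a • z)
            - ((y : WeakDual ℝ X) - T y • z)) = z := by
          rw [sub_sub_sub_cancel_left, ← sub_smul, smul_smul,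
            inv_mul_cancel₀ (sub_ne_zero.mpr (fun h => hne' h.symm)), one_smul]
        rw [h2] at h1
        exact hz h1
      rw [← ha]
      exact hta
    exact hmain
  -- apply full Mazur property
  have hcontf : Continuous f := hFM Y₀ hn₀ hcl₀ f hseq
  -- extract a finite defining set from continuity at 0
  have hV : (fun w : Y₀ => f w) ⁻¹' (Set.Ioo (-1 : ℝ) 1) ∈ 𝓝 (0 : Y₀) := by
    have h0 : Set.Ioo (-1 : ℝ) 1 ∈ 𝓝 (f 0) := by
      rw [map_zero f]; exact Ioo_mem_nhds (by norm_num) (by norm_num)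
    exact hcontf.continuousAt.preimage_mem_nhds h0
  have hnhds0 : 𝓝 ((0 : Y₀) : WeakDual ℝ X) = Filter.comap
      (fun (w : WeakDual ℝ X) (x : X) => w x) (𝓝 (fun x => ((0 : Y₀) : WeakDual ℝ X) x)) :=
    (WeakBilin.isEmbedding (B := topDualPairing ℝ X)
      ContinuousLinearMap.coe_injective).toIsInducing.nhds_eq_comap _
  rw [nhds_subtype_eq_comap, Filter.mem_comap] at hV
  obtain ⟨s₁, hs₁, hsub₁⟩ := hV
  rw [hnhds0, Filter.mem_comap] at hs₁
  obtain ⟨s₂, hs₂, hsub₂⟩ := hs₁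
  have h0fun : (fun x => ((0 : Y₀) : WeakDual ℝ X) x) = (fun _ : X => (0 : ℝ)) := by
    funext x; rfl
  rw [h0fun, nhds_pi, Filter.mem_pi] at hs₂
  obtain ⟨I, hIfin, ts, hts, htsub⟩ := hs₂
  -- vanishing claim
  have hclaim : ∀ w : Y₀, (∀ x ∈ I, (w : WeakDual ℝ X) x = 0) → f w = 0 := by
    intro w hw
    by_contra hfw
    have hcw : ∀ c : ℝ, c * f w ∈ Set.Ioo (-1 : ℝ) 1 := by
      intro c
      have hmem : (fun x => ((c • w : Y₀) : WeakDual ℝ X) x) ∈ Set.pi I ts := by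
        intro x hx
        show ((c • w : Y₀) : WeakDual ℝ X) x ∈ ts x
        have hcx : ((c • w : Y₀) : WeakDual ℝ X) x = c * (w : WeakDual ℝ X) x := rfl
        rw [hcx, hw x hx, mul_zero]
        exact mem_of_mem_nhds (hts x)
      have h6 : (c • w : Y₀) ∈ (fun w : Y₀ => f w) ⁻¹' (Set.Ioo (-1 : ℝ) 1) :=
        hsub₁ (hsub₂ (htsub hmem))
      rw [Set.mem_preimage, map_smul, smul_eq_mul] at h6
      exact h6
    have h7 := hcw (2 * (f w)⁻¹)
    rw [mul_assoc, inv_mul_cancel₀ hfw, mul_one] at h7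
    have := h7.2
    norm_num at this
  -- linear algebra: f is a combination of evaluations
  haveI : Fintype ↥I := hIfin.fintype
  let ev : X → (Y₀ →ₗ[ℝ] ℝ) := fun x =>
    { toFun := fun w => (w : WeakDual ℝ X) x
      map_add' := fun w₁ w₂ => rfl
      map_smul' := fun a w => rfl }
  have hker : ⨅ (i : ↥I), LinearMap.ker (ev (i : X)) ≤ LinearMap.ker f := by
    intro w hw
    rw [LinearMap.mem_ker]
    refine hclaim w fun x hx => ?_
    have h8 := (Submodule.mem_iInf _).mp hw ⟨x, hx⟩
    exact h8
  have hspan := mem_span_of_iInf_ker_le_ker (L := fun i : ↥I => ev (i : X)) (K := f) hker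
  obtain ⟨aco, haco⟩ := (Submodule.mem_span_range_iff_exists_fun ℝ).mp hspan
  set x₀ : X := ∑ i : ↥I, aco i • (i : X) with hx₀def
  have hfeval : ∀ w : Y₀, f w = (w : WeakDual ℝ X) x₀ := by
    intro w
    have h1 : (w : WeakDual ℝ X) x₀ = ∑ i : ↥I, aco i • ((w : WeakDual ℝ X) (i : X)) := by
      rw [hx₀def, map_sum]
      congr 1
      funext i
      exact (w : WeakDual ℝ X).map_smul _ _
    rw [h1, ← haco]
    simp only [LinearMap.coe_sum, Finset.sum_apply, LinearMap.smul_apply, smul_eq_mul]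
    exact Finset.sum_congr rfl fun i _ => rfl
  -- contradiction
  have hY0 : ∀ y' ∈ Y, y' x₀ = 0 := by
    intro y' hy'
    have hmem : y' ∈ Y₀ := Submodule.mem_sup_left hy'
    have h9 : f ⟨y', hmem⟩ = 0 := by
      rw [hfT]
      exact hTu ⟨y', hmem⟩ 0 (by simpa using hy')
    rw [hfeval ⟨y', hmem⟩] at h9
    exact h9
  have hx₀0 : x₀ = 0 := norming_eq_zero hn hY0
  have hzz : z ∈ Y₀ := Submodule.mem_sup_right (Submodule.mem_span_singleton_self z)
  have h1 : f ⟨z, hzz⟩ = 1 := by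
    rw [hfT]
    exact hTu ⟨z, hzz⟩ 1 (by simpa using Y.zero_mem)
  rw [hfeval ⟨z, hzz⟩, hx₀0] at h1
  simpa using h1

end Forward

lemma clm_norm_smul {F : Type*} [NormedAddCommGroup F] [NormedSpace ℝ F]
    (s : ℝ) (f : F →L[ℝ] ℝ) : ‖s • f‖ = |s| * ‖f‖ := norm_smul s f

lemma clm_norm_nonneg {F : Type*} [NormedAddCommGroup F] [NormedSpace ℝ F]
    (f : F →L[ℝ] ℝ) : 0 ≤ ‖f‖ := norm_nonneg f

lemma ker_dist_bound {E : Type*} [NormedAddCommGroup E] [NormedSpace ℝ E]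
    (f' : E →L[ℝ] ℝ) (v₀ : E) (hv₀ : f' v₀ = 1) (ξ : E →L[ℝ] ℝ) (bound : ℝ) (h0 : 0 ≤ bound)
    (hb : ∀ v : E, f' v = 0 → ‖v‖ ≤ 1 → |ξ v| ≤ bound) :
    ∃ s : ℝ, ‖ξ - s • f'‖ ≤ bound := by
  set N : Submodule ℝ E := LinearMap.ker (f' : E →ₗ[ℝ] ℝ) with hN
  let φ : ↥N →L[ℝ] ℝ := ξ.comp N.subtypeL
  have hφ : ‖φ‖ ≤ bound := by
    refine ContinuousLinearMap.opNorm_le_bound φ h0 fun v => ?_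
    rcases eq_or_ne v 0 with rfl | hv0
    · simp
    · have hnv : 0 < ‖v‖ := norm_pos_iff.mpr hv0
      have hker : f' (((‖v‖⁻¹ • v : ↥N)) : E) = 0 :=
        LinearMap.mem_ker.mp ((‖v‖⁻¹ • v : ↥N)).2
      have hle1 : ‖(((‖v‖⁻¹ • v : ↥N)) : E)‖ ≤ 1 := by
        have h4 : ‖(((‖v‖⁻¹ • v : ↥N)) : E)‖ = ‖v‖⁻¹ * ‖v‖ := by
          rw [show (((‖v‖⁻¹ • v : ↥N)) : E) = ‖v‖⁻¹ • (v : E) from rfl, norm_smul,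
            Real.norm_eq_abs, abs_inv, abs_of_pos hnv]
          rfl
        rw [h4, inv_mul_cancel₀ hnv.ne']
      have hb' := hb _ hker hle1
      rw [show (((‖v‖⁻¹ • v : ↥N)) : E) = ‖v‖⁻¹ • (v : E) from rfl, map_smul,
        smul_eq_mul, abs_mul, abs_inv, abs_of_pos hnv] at hb'
      have h5 : |ξ (v : E)| ≤ bound * ‖v‖ := by
        calc |ξ (v : E)| = ‖v‖ * (‖v‖⁻¹ * |ξ (v : E)|) := by
              rw [← mul_assoc, mul_inv_cancel₀ hnv.ne', one_mul]
          _ ≤ ‖v‖ * bound := mul_le_mul_of_nonneg_left hb' hnv.le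
          _ = bound * ‖v‖ := mul_comm _ _
      exact h5
  obtain ⟨h, hhext, hhnorm⟩ := exists_extension_norm_eq N φ
  refine ⟨(ξ - h) v₀, ?_⟩
  have heq : ξ - ((ξ - h) v₀) • f' = h := by
    refine ContinuousLinearMap.ext fun v => ?_
    have hk : f' (v - f' v • v₀) = 0 := by
      rw [map_sub, map_smul, smul_eq_mul, hv₀, mul_one, sub_self]
    have hvN : (v - f' v • v₀) ∈ N := LinearMap.mem_ker.mpr hk
    have h1 : h (v - f' v • v₀) = ξ (v - f' v • v₀) := hhext ⟨_, hvN⟩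
    rw [map_sub, map_sub, map_smul, map_smul, smul_eq_mul, smul_eq_mul] at h1
    have h2 : (ξ - ((ξ - h) v₀) • f') v = ξ v - ((ξ - h) v₀) * f' v := rfl
    have h3 : (ξ - h) v₀ = ξ v₀ - h v₀ := rfl
    rw [h2, h3]
    linarith
  rw [heq, hhnorm]
  exact hφ

section Backward
variable {X : Type*} [NormedAddCommGroup X] [NormedSpace ℝ X]

set_option maxHeartbeats 1000000 in
theorem backward [CompleteSpace X]
    (hS : ∀ Y : Submodule ℝ (WeakDual ℝ X), IsNorming X Y → NormClosed X Y →
      S1 X (Y : Set (WeakDual ℝ X)) = Set.univ) : FullyMazur X := by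
  intro Y hn hcl f hseq
  obtain ⟨c, hc, hnx⟩ := hn
  -- Step 1: f is norm bounded
  obtain ⟨M, hM⟩ : ∃ M : ℝ, ∀ w : Y, |f w| ≤ M * dnorm X (w : WeakDual ℝ X) := by
    by_contra hnb
    push_neg at hnb
    choose w hw using fun n : ℕ => hnb ((n : ℝ) + 1)
    have hpos : ∀ n : ℕ, (0 : ℝ) < (n : ℝ) + 1 := fun n => by positivity
    have hF : ∀ n, 0 < |f (w n)| := by
      intro n
      have h1 := hw n
      nlinarith [dnorm_nonneg ((w n : Y) : WeakDual ℝ X), hpos n]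
    set v : ℕ → Y := fun n => (f (w n))⁻¹ • (w n) with hvdef
    have hfv : ∀ n, f (v n) = 1 := by
      intro n
      rw [hvdef]
      simp only [map_smul, smul_eq_mul]
      exact inv_mul_cancel₀ (abs_pos.mp (hF n))
    have hdv : ∀ n, dnorm X ((v n : Y) : WeakDual ℝ X) < 1 / ((n : ℝ) + 1) := by
      intro n
      have hco : ((v n : Y) : WeakDual ℝ X) = (f (w n))⁻¹ • ((w n : Y) : WeakDual ℝ X) := rfl
      have hsm : dnorm X ((v n : Y) : WeakDual ℝ X)
          = |f (w n)|⁻¹ * dnorm X ((w n : Y) : WeakDual ℝ X) := by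
        rw [hco]
        show ‖WeakDual.toStrongDual ((f (w n))⁻¹ • ((w n : Y) : WeakDual ℝ X))‖ = _
        rw [map_smul, norm_smul, Real.norm_eq_abs, abs_inv]
        rfl
      rw [hsm, mul_comm, ← div_eq_mul_inv, div_lt_div_iff₀ (hF n) (hpos n), one_mul, mul_comm]
      exact hw n
    have hv0 : Tendsto (fun n => ((v n : Y) : WeakDual ℝ X)) atTop
        (𝓝 (((0 : Y) : WeakDual ℝ X))) := by
      rw [wstar_tendsto_iff]
      intro x
      have h0 : (((0 : Y) : WeakDual ℝ X)) x = 0 := rfl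
      rw [h0]
      have htend : Tendsto (fun n : ℕ => (1 / ((n : ℝ) + 1)) * ‖x‖) atTop (𝓝 0) := by
        simpa using tendsto_one_div_add_atTop_nhds_zero_nat.mul_const ‖x‖
      refine squeeze_zero_norm (fun n => ?_) htend
      calc ‖((v n : Y) : WeakDual ℝ X) x‖
          ≤ dnorm X ((v n : Y) : WeakDual ℝ X) * ‖x‖ := eval_abs_le _ x
        _ ≤ (1 / ((n : ℝ) + 1)) * ‖x‖ :=
            mul_le_mul_of_nonneg_right (hdv n).le (norm_nonneg x)
    have hlim := hseq v 0 hv0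
    rw [map_zero] at hlim
    have h1 : Tendsto (fun _ : ℕ => (1 : ℝ)) atTop (𝓝 0) := by simpa [hfv] using hlim
    exact absurd (tendsto_nhds_unique h1 tendsto_const_nhds) zero_ne_one
  -- Step 2: if f is represented by a point of X, it is continuous
  by_cases hrep : ∃ x : X, ∀ w : Y, f w = (w : WeakDual ℝ X) x
  · obtain ⟨x, hx⟩ := hrep
    rw [show (⇑f) = fun w : Y => (w : WeakDual ℝ X) x from funext hx]
    exact (WeakDual.eval_continuous x).comp continuous_subtype_val
  -- Step 3: otherwise, contradiction
  · exfalso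
    let Y' : @Submodule ℝ (StrongDual ℝ X) _ _ NormedSpace.toModule :=
      Submodule.map ((WeakDual.toStrongDual (𝕜 := ℝ) (E := X)) :
        WeakDual ℝ X →ₗ[ℝ] StrongDual ℝ X) Y
    have hY'cl : IsClosed (Y' : Set (StrongDual ℝ X)) := by
      rw [Submodule.map_coe]; exact hcl
    have hmemY' : ∀ w : Y, (WeakDual.toStrongDual ((w : Y) : WeakDual ℝ X)) ∈ Y' :=
      fun w => Submodule.mem_map_of_mem w.2
    have hback : ∀ v : Y', WeakDual.toStrongDual.symm (v : StrongDual ℝ X) ∈ Y := by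
      intro v
      obtain ⟨y, hy, hey⟩ := Submodule.mem_map.mp v.2
      have : WeakDual.toStrongDual.symm (v : StrongDual ℝ X) = y := by
        rw [← hey]; exact WeakDual.toStrongDual.symm_apply_apply y
      rw [this]; exact hy
    let toY : Y' → Y := fun v => ⟨WeakDual.toStrongDual.symm (v : StrongDual ℝ X), hback v⟩
    have htoYadd : ∀ v₁ v₂ : Y', toY (v₁ + v₂) = toY v₁ + toY v₂ := by
      intro v₁ v₂; apply Subtype.ext
      show WeakDual.toStrongDual.symm ((v₁ : StrongDual ℝ X) + (v₂ : StrongDual ℝ X)) = _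
      rw [map_add]; rfl
    have htoYsmul : ∀ (a : ℝ) (v : Y'), toY (a • v) = a • toY v := by
      intro a v; apply Subtype.ext
      show WeakDual.toStrongDual.symm (a • (v : StrongDual ℝ X)) = _
      rw [map_smul]; rfl
    let g : Y' →ₗ[ℝ] ℝ :=
      { toFun := fun v => f (toY v)
        map_add' := fun v₁ v₂ => by
          show f (toY (v₁ + v₂)) = f (toY v₁) + f (toY v₂)
          rw [htoYadd, map_add]
        map_smul' := fun a v => by
          show f (toY (a • v)) = a • f (toY v)
          rw [htoYsmul, map_smul] }
    have hgb : ∀ v : Y', ‖g v‖ ≤ M * ‖(v : StrongDual ℝ X)‖ := by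
      intro v
      have hd : dnorm X ((toY v : Y) : WeakDual ℝ X) = ‖(v : StrongDual ℝ X)‖ := by
        show ‖WeakDual.toStrongDual (WeakDual.toStrongDual.symm _)‖ = _
        rw [LinearEquiv.apply_symm_apply]
      have := hM (toY v)
      rw [hd] at this
      exact this
    let f' : Y' →L[ℝ] ℝ := ⟨g, AddMonoidHomClass.continuous_of_bound g M hgb⟩
    have hf'g : ∀ v : Y', f' v = f (toY v) := fun v => rfl
    have hff' : ∀ w : Y, f' ⟨WeakDual.toStrongDual ((w : Y) : WeakDual ℝ X), hmemY' w⟩ = f w := by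
      intro w
      rw [hf'g]
      have heqw : toY ⟨WeakDual.toStrongDual ((w : Y) : WeakDual ℝ X), hmemY' w⟩ = w :=
        Subtype.ext (WeakDual.toStrongDual.symm_apply_apply _)
      rw [heqw]
    let J : X → (Y' →L[ℝ] ℝ) := fun x =>
      (NormedSpace.inclusionInDoubleDual ℝ X x).comp (Submodule.subtypeL Y')
    have hJapp : ∀ (x : X) (v : Y'), J x v = (v : StrongDual ℝ X) x := fun x v => rfl
    have hJsub : ∀ x₁ x₂ : X, J (x₁ - x₂) = J x₁ - J x₂ := by
      intro x₁ x₂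
      show (NormedSpace.inclusionInDoubleDual ℝ X (x₁ - x₂)).comp (Submodule.subtypeL Y') = _
      rw [map_sub, ContinuousLinearMap.sub_comp]
    have hJsmul : ∀ (a : ℝ) (x : X), J (a • x) = a • J x := by
      intro a x
      show (NormedSpace.inclusionInDoubleDual ℝ X (a • x)).comp (Submodule.subtypeL Y') = _
      rw [map_smul, ContinuousLinearMap.smul_comp]
    have hJlow : ∀ x, c * ‖x‖ ≤ ‖J x‖ := by
      intro x
      refine (hnx x).trans (csSup_le ⟨0, zero_mem_nset Y x⟩ ?_)
      rintro r ⟨y, hy, h1, rfl⟩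
      have hyY' : WeakDual.toStrongDual y ∈ Y' := Submodule.mem_map_of_mem hy
      have h2 : |y x| ≤ ‖J x‖ := by
        calc |y x| = ‖(J x) ⟨WeakDual.toStrongDual y, hyY'⟩‖ := rfl
          _ ≤ ‖J x‖ * ‖(⟨WeakDual.toStrongDual y, hyY'⟩ : Y')‖ := (J x).le_opNorm _
          _ ≤ ‖J x‖ * 1 := mul_le_mul_of_nonneg_left h1 ((J x).opNorm_nonneg)
          _ = ‖J x‖ := mul_one _
      exact (le_abs_self _).trans h2
    have hJle : ∀ x, ‖J x‖ ≤ ‖x‖ := by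
      intro x
      refine ContinuousLinearMap.opNorm_le_bound _ (norm_nonneg x) fun v => ?_
      calc ‖(J x) v‖ = ‖(v : StrongDual ℝ X) x‖ := rfl
        _ ≤ ‖(v : StrongDual ℝ X)‖ * ‖x‖ := (v : StrongDual ℝ X).le_opNorm x
        _ = ‖x‖ * ‖v‖ := mul_comm _ _
    have hlip : LipschitzWith 1 J := by
      refine LipschitzWith.of_dist_le_mul fun x₁ x₂ => ?_
      have hd : dist (J x₁) (J x₂) = ‖J x₁ - J x₂‖ := dist_eq_norm (J x₁) (J x₂)
      rw [NNReal.coe_one, one_mul]; erw [hd]; rw [dist_eq_norm, ← hJsub]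
      exact hJle _
    have hanti : AntilipschitzWith (⟨c, hc.le⟩ : NNReal)⁻¹ J := by
      refine AntilipschitzWith.of_le_mul_dist fun x₁ x₂ => ?_
      have hd : dist (J x₁) (J x₂) = ‖J x₁ - J x₂‖ := dist_eq_norm (J x₁) (J x₂)
      erw [hd]; rw [dist_eq_norm, ← hJsub]
      have h1 := hJlow (x₁ - x₂)
      have h2 : ((((⟨c, hc.le⟩ : NNReal))⁻¹ : NNReal) : ℝ) = c⁻¹ := rfl
      rw [h2, ← div_eq_inv_mul, le_div_iff₀ hc, mul_comm]
      exact h1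
    have hrange : IsClosed (Set.range J) := hanti.isClosed_range hlip.uniformContinuous
    have hf'nr : f' ∉ Set.range J := by
      rintro ⟨x, hx⟩
      refine hrep ⟨x, fun w => ?_⟩
      rw [← hff' w, ← hx]
      rfl
    set d₀ := Metric.infDist f' (Set.range J) with hd₀def
    have hd₀pos : 0 < d₀ :=
      (hrange.notMem_iff_infDist_pos ⟨J 0, Set.mem_range_self 0⟩).mp hf'nr
    have hd₀le : ∀ x, d₀ ≤ ‖f' - J x‖ := fun x =>
      le_trans (Metric.infDist_le_dist_of_mem (Set.mem_range_self x))
        (le_of_eq (dist_eq_norm f' (J x)))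
    have hf'ne : f' ≠ 0 := by
      intro h0
      refine hrep ⟨0, fun w => ?_⟩
      rw [← hff' w, h0]
      show (0 : ℝ) = ((w : Y) : WeakDual ℝ X) 0
      rw [map_zero]
    have hf'norm : 0 < ‖f'‖ := by
      rcases lt_or_eq_of_le (ContinuousLinearMap.opNorm_nonneg f') with h | h
      · exact h
      · exact absurd (ContinuousLinearMap.opNorm_zero_iff f' |>.mp h.symm) hf'ne
    set m := min (1 / 2 : ℝ) (d₀ / (2 * ‖f'‖)) with hmdef
    have hmpos : 0 < m := lt_min (by norm_num) (by positivity)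
    have hdistlow : ∀ (x : X) (s : ℝ), m * ‖J x‖ ≤ ‖J x - s • f'‖ := by
      intro x s
      rcases le_or_gt (|s| * ‖f'‖) (‖J x‖ / 2) with hcase | hcase
      · have hsf : ‖s • f'‖ = |s| * ‖f'‖ := clm_norm_smul s f'
        calc m * ‖J x‖ ≤ (1 / 2) * ‖J x‖ :=
            mul_le_mul_of_nonneg_right (min_le_left _ _) ((J x).opNorm_nonneg)
          _ ≤ ‖J x‖ - ‖s • f'‖ := by rw [hsf]; linarith
          _ ≤ ‖J x - s • f'‖ := norm_sub_norm_le (J x) (s • f')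
      · have hs0 : s ≠ 0 := by
          intro h0
          rw [h0, abs_zero, zero_mul] at hcase
          exact absurd hcase (not_lt.mpr (by positivity))
        have hrw : J x - s • f' = (-s) • (f' - J (s⁻¹ • x)) := by
          refine ContinuousLinearMap.ext fun v => ?_
          have h1 : (J x - s • f') v = (J x) v - s * f' v := rfl
          have h2 : ((-s) • (f' - J (s⁻¹ • x))) v = (-s) * (f' v - (J (s⁻¹ • x)) v) := rfl
          have h3 : (J (s⁻¹ • x)) v = s⁻¹ * ((J x) v) := by
            rw [hJsmul]; rfl
          rw [h1, h2, h3]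
          field_simp
          ring
        have h1 : ‖J x - s • f'‖ = |s| * ‖f' - J (s⁻¹ • x)‖ := by
          rw [hrw]
          exact (clm_norm_smul (-s) (f' - J (s⁻¹ • x))).trans (by rw [abs_neg]; rfl)
        have h2 : d₀ ≤ ‖f' - J (s⁻¹ • x)‖ := hd₀le _
        calc m * ‖J x‖ ≤ (d₀ / (2 * ‖f'‖)) * ‖J x‖ :=
            mul_le_mul_of_nonneg_right (min_le_right _ _) ((J x).opNorm_nonneg)
          _ ≤ |s| * d₀ := by
              rw [div_mul_eq_mul_div, div_le_iff₀ (by positivity)]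
              nlinarith [hd₀pos.le, hcase, abs_nonneg s]
          _ ≤ |s| * ‖f' - J (s⁻¹ • x)‖ := mul_le_mul_of_nonneg_left h2 (abs_nonneg s)
          _ = ‖J x - s • f'‖ := h1.symm
    -- a unit vector for f'
    obtain ⟨v₀, hv₀⟩ : ∃ v₀ : Y', f' v₀ = 1 := by
      have hex : ∃ v, f' v ≠ 0 := by
        by_contra hall
        push_neg at hall
        exact hf'ne (ContinuousLinearMap.ext fun v => by rw [hall v]; rfl)
      obtain ⟨v, hv⟩ := hex
      exact ⟨(f' v)⁻¹ • v, by rw [map_smul, smul_eq_mul, inv_mul_cancel₀ hv]⟩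
    -- the kernel subspaces
    set N : Submodule ℝ Y' := LinearMap.ker (f' : Y' →ₗ[ℝ] ℝ) with hNdef
    set Z : Submodule ℝ (WeakDual ℝ X) := Submodule.map Y.subtype (LinearMap.ker f) with hZdef
    have hZmem : ∀ w : Y, f w = 0 → ((w : Y) : WeakDual ℝ X) ∈ Z :=
      fun w hw => Submodule.mem_map.mpr ⟨w, LinearMap.mem_ker.mpr hw, rfl⟩
    -- norming of the kernel
    have hnZ : IsNorming X Z := by
      refine ⟨m * c, by positivity, fun x => ?_⟩
      show m * c * ‖x‖ ≤ sSup (nset Z x)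
      have hsup0 : 0 ≤ sSup (nset Z x) := le_csSup (nset_bddAbove Z x) (zero_mem_nset Z x)
      have hbnd : ∀ v : Y', f' v = 0 → ‖v‖ ≤ 1 → |(J x) v| ≤ sSup (nset Z x) := by
        intro v hv hv1
        have hmemZ : WeakDual.toStrongDual.symm ((v : StrongDual ℝ X)) ∈ Z := by
          refine Submodule.mem_map.mpr ⟨toY v, LinearMap.mem_ker.mpr ?_, rfl⟩
          have hfv : f (toY v) = f' v := rfl
          rw [hfv]; exact hv
        have hdn : dnorm X (WeakDual.toStrongDual.symm ((v : StrongDual ℝ X)))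
            = ‖(v : StrongDual ℝ X)‖ := by
          show ‖WeakDual.toStrongDual (WeakDual.toStrongDual.symm _)‖ = _
          rw [LinearEquiv.apply_symm_apply]
        have happ : (J x) v = (WeakDual.toStrongDual.symm ((v : StrongDual ℝ X))) x := rfl
        rw [happ]
        exact abs_le_sSup_nset hmemZ (by rw [hdn]; exact hv1)
      obtain ⟨s', hs'⟩ := ker_dist_bound f' v₀ hv₀ (J x) (sSup (nset Z x)) hsup0 hbnd
      have hkey : m * ‖J x‖ ≤ sSup (nset Z x) := le_trans (hdistlow x s') hs'
      calc m * c * ‖x‖ = m * (c * ‖x‖) := by ring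
        _ ≤ m * ‖J x‖ := mul_le_mul_of_nonneg_left (hJlow x) hmpos.le
        _ ≤ sSup (nset Z x) := hkey
    -- norm closedness of the kernel
    have hclZ : NormClosed X Z := by
      have heq : ((fun y => WeakDual.toStrongDual y) '' (Z : Set (WeakDual ℝ X)))
          = (Subtype.val '' (N : Set Y') : Set (StrongDual ℝ X)) := by
        ext d
        constructor
        · rintro ⟨w, hw, rfl⟩
          obtain ⟨w', hw', rfl⟩ := Submodule.mem_map.mp hw
          refine ⟨⟨WeakDual.toStrongDual ((w' : Y) : WeakDual ℝ X), hmemY' w'⟩,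
            LinearMap.mem_ker.mpr (by show f' ⟨WeakDual.toStrongDual ((w' : Y) : WeakDual ℝ X), hmemY' w'⟩ = 0; rw [hff' w']; exact LinearMap.mem_ker.mp hw'), rfl⟩
        · rintro ⟨v, hv, rfl⟩
          refine ⟨WeakDual.toStrongDual.symm ((v : Y') : StrongDual ℝ X), ?_, ?_⟩
          · refine Submodule.mem_map.mpr ⟨toY v, LinearMap.mem_ker.mpr ?_, rfl⟩
            have hfv : f (toY v) = f' v := rfl
            rw [hfv]
            exact LinearMap.mem_ker.mp hv
          · show WeakDual.toStrongDual (WeakDual.toStrongDual.symm _) = _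
            rw [LinearEquiv.apply_symm_apply]
      unfold NormClosed
      rw [heq]
      have hNcl : IsClosed (N : Set Y') := ContinuousLinearMap.isClosed_ker f'
      exact hY'cl.isClosedEmbedding_subtypeVal.isClosedMap _ hNcl
    -- conclude: f vanishes on Y
    have hzero : ∀ w : Y, f w = 0 := by
      intro w
      have hmem : ((w : Y) : WeakDual ℝ X) ∈ S1 X (Z : Set (WeakDual ℝ X)) := by
        rw [hS Z hnZ hclZ]; trivial
      obtain ⟨u, hu, hconv⟩ := hmem
      have hZY : Z ≤ Y := Submodule.map_subtype_le Y _
      set u' : ℕ → Y := fun n => ⟨u n, hZY (hu n)⟩ with hu'def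
      have hfu : ∀ n, f (u' n) = 0 := by
        intro n
        obtain ⟨w'', hw'', hww⟩ := Submodule.mem_map.mp (hu n)
        have heq' : u' n = w'' := Subtype.ext (by rw [hu'def]; exact hww.symm)
        rw [heq']
        exact LinearMap.mem_ker.mp hw''
      have hlim := hseq u' w hconv
      have h0 : Tendsto (fun _ : ℕ => (0 : ℝ)) atTop (𝓝 (f w)) := by
        simpa [hfu] using hlim
      exact (tendsto_nhds_unique h0 tendsto_const_nhds)
    refine hrep ⟨0, fun w => ?_⟩
    rw [hzero w]
    show (0 : ℝ) = ((w : Y) : WeakDual ℝ X) 0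
    rw [map_zero]

end Backward

/-- A Banach space `X` is fully Mazur iff `S₁(Y) = X*` for every
norming and norm-closed subspace `Y ⊆ X*`. -/
theorem statement0 (X : Type*) [NormedAddCommGroup X] [NormedSpace ℝ X] [CompleteSpace X] :
    FullyMazur X ↔
      ∀ Y : Submodule ℝ (WeakDual ℝ X), IsNorming X Y → NormClosed X Y →
        S1 X (Y : Set (WeakDual ℝ X)) = Set.univ := by
  constructor
  · intro h Y hn hcl
    exact forward h Y hn hcl
  · intro h
    exact backward h
end

section
/- Let X be a real Banach space, let Z ⊆ X* be a norming and norm-closed subspace, and let x* ∈ X* be such that x* is not the weak-star limit of any sequence contained in Z (i.e., x* ∉ S₁(Z)). Then x* ∉ Z, and the linear functional f on the subspace Y := Z ⊕ ℝx* defined by f(z* + λx*) := λ (for z* ∈ Z and λ ∈ ℝ) is w*-sequentially continuous but not w*-continuous; in particular (Y, w*) fails the Mazur property and X is not fully Mazur. -/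
open Filter Topology

set_option maxHeartbeats 1000000
set_option synthInstance.maxHeartbeats 400000

section Aux

variable {X : Type*} [NormedAddCommGroup X] [NormedSpace ℝ X]

private lemma wd_smul_apply (c : ℝ) (w : WeakDual ℝ X) (x : X) : (c • w) x = c * w x := rfl

private lemma wd_add_apply (a b : WeakDual ℝ X) (x : X) : (a + b) x = a x + b x := rfl

private lemma wd_sub_apply (a b : WeakDual ℝ X) (x : X) : (a - b) x = a x - b x := rfl

private lemma wd_zero_apply (x : X) : (0 : WeakDual ℝ X) x = 0 := rfl

private lemma tendstoWD_iff {α : Type*} {l : Filter α} {u : α → WeakDual ℝ X}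
    {y : WeakDual ℝ X} :
    Tendsto u l (𝓝 y) ↔ ∀ x, Tendsto (fun n => u n x) l (𝓝 (y x)) :=
  tendsto_iff_forall_eval_tendsto_topDualPairing

/-- Evaluation at a point as a linear functional on the weak-star dual. -/
private noncomputable def evalWD (x : X) : WeakDual ℝ X →ₗ[ℝ] ℝ where
  toFun w := w x
  map_add' _ _ := rfl
  map_smul' _ _ := rfl

/-- A norming subspace exactly interpolates any functional on any finite set of points. -/
private lemma norming_interp (Z : Submodule ℝ (WeakDual ℝ X)) (hZn : IsNorming X Z)
    (xs : WeakDual ℝ X) (s : Finset X) : ∃ z ∈ Z, ∀ x ∈ s, z x = xs x := by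
  classical
  obtain ⟨c, hc, hnorm⟩ := hZn
  set T : WeakDual ℝ X →ₗ[ℝ] (↥s → ℝ) := LinearMap.pi (fun i => evalWD (i : X)) with hT
  set V : Submodule ℝ (↥s → ℝ) := Z.map T with hV
  by_cases hmem : T xs ∈ V
  · obtain ⟨z, hz, hzT⟩ := hmem
    exact ⟨z, hz, fun x hx => congrFun hzT ⟨x, hx⟩⟩
  · exfalso
    have hq : (Submodule.Quotient.mk (T xs) : (↥s → ℝ) ⧸ V) ≠ 0 := by
      simpa [Submodule.Quotient.mk_eq_zero] using hmem
    obtain ⟨φ, hφ⟩ : ∃ φ : Module.Dual ℝ ((↥s → ℝ) ⧸ V),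
        φ (Submodule.Quotient.mk (T xs)) ≠ 0 := by
      by_contra h
      push_neg at h
      exact hq ((Module.forall_dual_apply_eq_zero_iff ℝ _).mp h)
    set b : Module.Dual ℝ (↥s → ℝ) := φ.comp V.mkQ with hb
    have hbZ : ∀ z ∈ Z, b (T z) = 0 := by
      intro z hz
      have hTz : T z ∈ V := ⟨z, hz, rfl⟩
      have : V.mkQ (T z) = 0 := (Submodule.Quotient.mk_eq_zero V).mpr hTz
      simp [hb, LinearMap.comp_apply, this]
    have hbxs : b (T xs) ≠ 0 := hφ
    set x₀ : X := ∑ i : ↥s, (b ((Pi.single i (1:ℝ)) : ↥s → ℝ) : ℝ) • (i : X) with hx₀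
    have key : ∀ w : WeakDual ℝ X, w x₀ = b (T w) := by
      intro w
      have h1 : w x₀ = ∑ i : ↥s, b ((Pi.single i (1:ℝ)) : ↥s → ℝ) * w (i : X) := by
        rw [hx₀, map_sum]
        exact Finset.sum_congr rfl fun i _ => by rw [map_smul]; rfl
      have h2 : T w = ∑ i : ↥s, w (i : X) • ((Pi.single i (1:ℝ)) : ↥s → ℝ) := by
        have := Finset.univ_sum_single (T w)
        rw [← this]
        refine Finset.sum_congr rfl fun i _ => ?_
        have : (T w) i = w (i : X) := rfl
        rw [this, ← Pi.single_smul, smul_eq_mul, mul_one]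
      rw [h1, h2, map_sum]
      exact Finset.sum_congr rfl fun i _ => by rw [map_smul, smul_eq_mul, mul_comm]
    have hZx₀ : ∀ z ∈ Z, z x₀ = 0 := fun z hz => by rw [key]; exact hbZ z hz
    have hset : {r : ℝ | ∃ y ∈ Z, dnorm X y ≤ 1 ∧ r = y x₀} = {0} := by
      apply Set.eq_singleton_iff_unique_mem.mpr
      refine ⟨⟨0, Z.zero_mem, by simp [dnorm], (wd_zero_apply x₀).symm⟩, ?_⟩
      rintro r ⟨y, hy, -, rfl⟩
      exact hZx₀ y hy
    have hle := hnorm x₀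
    rw [hset, csSup_singleton] at hle
    have hx0 : x₀ = 0 := by
      have h1 : ‖x₀‖ ≤ 0 := by nlinarith [norm_nonneg x₀]
      simpa using le_antisymm h1 (norm_nonneg x₀)
    apply hbxs
    rw [← key xs, hx0, map_zero]

/-- Any weak-star neighborhood of `0` contains the common kernel of finitely many
evaluations. -/
private lemma mem_of_nhds_zero {U : Set (WeakDual ℝ X)} (hU : U ∈ 𝓝 (0 : WeakDual ℝ X)) :
    ∃ s : Finset X, ∀ w : WeakDual ℝ X, (∀ x ∈ s, w x = 0) → w ∈ U := by
  classical
  have hemb := WeakBilin.isEmbedding (B := topDualPairing ℝ X)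
    ContinuousLinearMap.coe_injective
  have hn : 𝓝 (0 : WeakDual ℝ X) =
      Filter.comap (fun (w : WeakDual ℝ X) (x : X) => topDualPairing ℝ X w x)
        (𝓝 (fun x => topDualPairing ℝ X (0 : WeakDual ℝ X) x)) :=
    hemb.toIsInducing.nhds_eq_comap 0
  rw [hn, Filter.mem_comap] at hU
  obtain ⟨P, hP, hPU⟩ := hU
  rw [nhds_pi, Filter.mem_pi] at hP
  obtain ⟨I, hIfin, t, ht, htP⟩ := hP
  refine ⟨hIfin.toFinset, fun w hw => ?_⟩
  apply hPU
  apply htP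
  intro i hi
  have h0 : topDualPairing ℝ X w i = 0 := hw i (hIfin.mem_toFinset.mpr hi)
  have ht0 : (0 : ℝ) ∈ t i := by
    have := ht i
    exact mem_of_mem_nhds this
  simpa [h0] using ht0

variable (Z : Submodule ℝ (WeakDual ℝ X)) (xs : WeakDual ℝ X)

private lemma xs_mem_sup : xs ∈ Z ⊔ Submodule.span ℝ {xs} :=
  Submodule.mem_sup_right (Submodule.mem_span_singleton_self xs)

/-- The canonical functional on `Z ⊕ ℝ x*` is not weak-star continuous. -/
private lemma f_not_cont (hZn : IsNorming X Z)
    (f : ↥(Z ⊔ Submodule.span ℝ {xs}) →ₗ[ℝ] ℝ)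
    (hf : ∀ (w : ↥(Z ⊔ Submodule.span ℝ {xs})) (z : WeakDual ℝ X) (l : ℝ),
        z ∈ Z → (w : WeakDual ℝ X) = z + l • xs → f w = l) :
    ¬ Continuous f := by
  intro hc
  have h0 : f 0 = 0 := map_zero f
  have hnb : f ⁻¹' (Set.Iio 1) ∈ 𝓝 (0 : ↥(Z ⊔ Submodule.span ℝ {xs})) := by
    refine hc.continuousAt.preimage_mem_nhds ?_
    rw [h0]
    exact Iio_mem_nhds one_pos
  rw [show (0 : ↥(Z ⊔ Submodule.span ℝ {xs})) = ⟨0, Submodule.zero_mem _⟩ from rfl,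
    nhds_subtype_eq_comap, Filter.mem_comap] at hnb
  obtain ⟨U, hU, hUsub⟩ := hnb
  obtain ⟨s, hs⟩ := mem_of_nhds_zero hU
  obtain ⟨z, hz, hzs⟩ := norming_interp Z hZn xs s
  have hmemY : (2 : ℝ) • (xs - z) ∈ Z ⊔ Submodule.span ℝ {xs} := by
    refine Submodule.smul_mem _ _ (Submodule.sub_mem _ ?_ ?_)
    · exact xs_mem_sup Z xs
    · exact Submodule.mem_sup_left hz
  set yY : ↥(Z ⊔ Submodule.span ℝ {xs}) := ⟨(2 : ℝ) • (xs - z), hmemY⟩ with hyY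
  have hfy : f yY = 2 := by
    refine hf yY ((-2 : ℝ) • z) 2 (Z.smul_mem _ hz) ?_
    show (2 : ℝ) • (xs - z) = (-2 : ℝ) • z + (2 : ℝ) • xs
    module
  have hmemU : (yY : WeakDual ℝ X) ∈ U := by
    apply hs
    intro x hx
    rw [hyY]
    show ((2 : ℝ) • (xs - z)) x = 0
    rw [wd_smul_apply, wd_sub_apply, hzs x hx]
    ring
  have : f yY < 1 := hUsub hmemU
  rw [hfy] at this
  linarith

/-- The canonical functional on `Z ⊕ ℝ x*` is weak-star sequentially continuous when
`x* ∉ S₁(Z)`. -/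
private lemma f_seqcont (hxs : xs ∉ S1 X (Z : Set (WeakDual ℝ X)))
    (f : ↥(Z ⊔ Submodule.span ℝ {xs}) →ₗ[ℝ] ℝ)
    (hf : ∀ (w : ↥(Z ⊔ Submodule.span ℝ {xs})) (z : WeakDual ℝ X) (l : ℝ),
        z ∈ Z → (w : WeakDual ℝ X) = z + l • xs → f w = l) :
    WStarSeqCont X f := by
  intro u y hu
  have hdec : ∀ w : ↥(Z ⊔ Submodule.span ℝ {xs}),
      ∃ p : WeakDual ℝ X × ℝ, p.1 ∈ Z ∧ (w : WeakDual ℝ X) = p.1 + p.2 • xs := by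
    intro w
    obtain ⟨z, hz, v, hv, hzv⟩ := Submodule.mem_sup.mp w.2
    obtain ⟨l, rfl⟩ := Submodule.mem_span_singleton.mp hv
    exact ⟨(z, l), hz, hzv.symm⟩
  choose p hp hw using hdec
  have hfval : ∀ w, f w = (p w).2 := fun w => hf w (p w).1 (p w).2 (hp w) (hw w)
  simp only [hfval]
  by_contra hno
  rw [Metric.tendsto_atTop] at hno
  push_neg at hno
  obtain ⟨ε, hε, hfreq⟩ := hno
  obtain ⟨φ, hφmono, hφ⟩ := Filter.extraction_of_frequently_atTop
    (Filter.frequently_atTop.mpr hfreq)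
  set μ : ℕ → ℝ := fun k => (p (u (φ k))).2 - (p y).2 with hμdef
  have hμ : ∀ k, ε ≤ |μ k| := by
    intro k
    have := hφ k
    rwa [Real.dist_eq] at this
  have hμ0 : ∀ k, μ k ≠ 0 := fun k h => by
    have := hμ k
    rw [h, abs_zero] at this
    linarith
  set sq : ℕ → WeakDual ℝ X :=
    fun k => (μ k)⁻¹ • ((p y).1 - (p (u (φ k))).1) with hsq
  have hsqZ : ∀ k, sq k ∈ (Z : Set (WeakDual ℝ X)) :=
    fun k => Z.smul_mem _ (Z.sub_mem (hp y) (hp (u (φ k))))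
  have hkey : ∀ k (x : X), sq k x =
      xs x - (μ k)⁻¹ * ((u (φ k) : WeakDual ℝ X) x - (y : WeakDual ℝ X) x) := by
    intro k x
    have h1 : (u (φ k) : WeakDual ℝ X) x = (p (u (φ k))).1 x + (p (u (φ k))).2 * xs x := by
      rw [hw (u (φ k))]
      rw [wd_add_apply, wd_smul_apply]
    have h2 : (y : WeakDual ℝ X) x = (p y).1 x + (p y).2 * xs x := by
      rw [hw y]
      rw [wd_add_apply, wd_smul_apply]
    rw [hsq]
    show (μ k)⁻¹ * (((p y).1 - (p (u (φ k))).1) x) = _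
    rw [wd_sub_apply, h1, h2, hμdef]
    have hne : ((p (u (φ k))).2 - (p y).2) ≠ 0 := hμ0 k
    field_simp
    ring
  have hlim : Tendsto sq atTop (𝓝 xs) := by
    rw [tendstoWD_iff]
    intro x
    have hux : Tendsto (fun n => (u n : WeakDual ℝ X) x) atTop (𝓝 ((y : WeakDual ℝ X) x)) :=
      tendstoWD_iff.mp hu x
    have hd : Tendsto (fun k => (u (φ k) : WeakDual ℝ X) x - (y : WeakDual ℝ X) x)
        atTop (𝓝 0) := by
      have := (hux.comp hφmono.tendsto_atTop).sub_const ((y : WeakDual ℝ X) x)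
      simpa using this
    have h2 : Tendsto (fun k => (μ k)⁻¹ * ((u (φ k) : WeakDual ℝ X) x - (y : WeakDual ℝ X) x))
        atTop (𝓝 0) := by
      rw [tendsto_zero_iff_norm_tendsto_zero]
      refine squeeze_zero (g := fun k => ε⁻¹ * ‖(u (φ k) : WeakDual ℝ X) x - (y : WeakDual ℝ X) x‖) (fun k => norm_nonneg _) (fun k => ?_) ?_
      · show ‖(μ k)⁻¹ * ((u (φ k) : WeakDual ℝ X) x - (y : WeakDual ℝ X) x)‖ ≤
          ε⁻¹ * ‖(u (φ k) : WeakDual ℝ X) x - (y : WeakDual ℝ X) x‖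
        rw [norm_mul]
        gcongr
        rw [Real.norm_eq_abs, abs_inv]
        exact inv_anti₀ hε (hμ k)
      · have := (hd.norm).const_mul ε⁻¹
        simpa using this
    have heq : (fun k => sq k x) = fun k =>
        xs x - (μ k)⁻¹ * ((u (φ k) : WeakDual ℝ X) x - (y : WeakDual ℝ X) x) :=
      funext fun k => hkey k x
    rw [heq]
    simpa using (tendsto_const_nhds (x := xs x) (f := atTop)).sub h2
  exact hxs ⟨sq, hsqZ, hlim⟩

/-- Construction of the functional `f(z + λ x*) = λ` on `Z ⊕ ℝ x*`. -/
private lemma exists_f (hxsZ : xs ∉ Z) :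
    ∃ f : ↥(Z ⊔ Submodule.span ℝ {xs}) →ₗ[ℝ] ℝ,
      ∀ (w : ↥(Z ⊔ Submodule.span ℝ {xs})) (z : WeakDual ℝ X) (l : ℝ),
        z ∈ Z → (w : WeakDual ℝ X) = z + l • xs → f w = l := by
  classical
  set Y := Z ⊔ Submodule.span ℝ {xs} with hYdef
  set Z' : Submodule ℝ ↥Y := Z.comap Y.subtype with hZ'
  have hxsY : xs ∈ Y := xs_mem_sup Z xs
  set xsY : ↥Y := ⟨xs, hxsY⟩ with hxsYdef
  set m : ↥Y ⧸ Z' := Submodule.Quotient.mk xsY with hm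
  have hm0 : m ≠ 0 := by
    rw [hm, ne_eq, Submodule.Quotient.mk_eq_zero]
    intro hmem
    exact hxsZ (by simpa [hZ', Submodule.mem_comap] using hmem)
  obtain ⟨φ, hφ⟩ : ∃ φ : Module.Dual ℝ (↥Y ⧸ Z'), φ m ≠ 0 := by
    by_contra h
    push_neg at h
    exact hm0 ((Module.forall_dual_apply_eq_zero_iff ℝ m).mp h)
  refine ⟨((φ m)⁻¹ • φ).comp Z'.mkQ, ?_⟩
  intro w z l hz hweq
  have hsub : w - l • xsY ∈ Z' := by
    rw [hZ', Submodule.mem_comap]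
    show (w : WeakDual ℝ X) - l • xs ∈ Z
    rw [hweq]
    simpa using hz
  have hmk : Z'.mkQ w = l • m := by
    rw [hm, ← sub_eq_zero, ← Submodule.Quotient.mk_smul, show Z'.mkQ w = Submodule.Quotient.mk w from rfl,
      ← Submodule.Quotient.mk_sub, Submodule.Quotient.mk_eq_zero]
    exact hsub
  rw [LinearMap.comp_apply, hmk]
  rw [map_smul, LinearMap.smul_apply, smul_eq_mul, smul_eq_mul]
  field_simp

/-- Enlarging a norming subspace keeps it norming. -/
private lemma isNorming_mono {W : Submodule ℝ (WeakDual ℝ X)} (hZW : Z ≤ W)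
    (hZn : IsNorming X Z) : IsNorming X W := by
  obtain ⟨c, hc, h⟩ := hZn
  refine ⟨c, hc, fun x => (h x).trans (csSup_le_csSup ?_ ?_ ?_)⟩
  · refine ⟨‖x‖, ?_⟩
    rintro r ⟨y, _, hd, rfl⟩
    calc y x ≤ |y x| := le_abs_self _
    _ = ‖(WeakDual.toStrongDual y) x‖ := rfl
    _ ≤ ‖WeakDual.toStrongDual y‖ * ‖x‖ := (WeakDual.toStrongDual y).le_opNorm x
    _ ≤ 1 * ‖x‖ := by
        have hx := norm_nonneg x
        have : ‖WeakDual.toStrongDual y‖ ≤ 1 := hd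
        nlinarith
    _ = ‖x‖ := one_mul _
  · exact ⟨0, 0, Z.zero_mem, by simp [dnorm], (wd_zero_apply x).symm⟩
  · rintro r ⟨y, hy, hd, rfl⟩
    exact ⟨y, hZW hy, hd, rfl⟩

/-- A closed subspace plus a one-dimensional subspace is closed. -/
private lemma isClosed_sup_span_s1 {E : Type*} [NormedAddCommGroup E] [NormedSpace ℝ E]
    (C : Submodule ℝ E) (hC : IsClosed (C : Set E)) (v : E) :
    IsClosed ((C ⊔ Submodule.span ℝ {v} : Submodule ℝ E) : Set E) := by
  haveI : IsClosed (C : Set E) := hC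
  have hcont : Continuous C.mkQ := by
    refine AddMonoidHomClass.continuous_of_bound C.mkQ 1 (fun m => ?_)
    simpa using Submodule.Quotient.norm_mk_le C m
  have hfd : IsClosed ((Submodule.span ℝ {C.mkQ v} : Submodule ℝ (E ⧸ C)) : Set (E ⧸ C)) :=
    Submodule.closed_of_finiteDimensional _
  have hspan : Submodule.map C.mkQ (Submodule.span ℝ {v}) = Submodule.span ℝ {C.mkQ v} := by
    rw [Submodule.map_span, Set.image_singleton]
  have hpre : (C ⊔ Submodule.span ℝ {v} : Submodule ℝ E) =
      (Submodule.span ℝ {C.mkQ v}).comap C.mkQ := by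
    rw [← hspan, Submodule.comap_map_eq, Submodule.ker_mkQ, sup_comm]
  rw [hpre]
  exact hfd.preimage hcont

/-- `Z ⊔ span {xs}` is norm-closed if `Z` is. -/
private lemma normClosed_sup (hZc : NormClosed X Z) :
    NormClosed X (Z ⊔ Submodule.span ℝ {xs}) := by
  set e : WeakDual ℝ X →ₗ[ℝ] StrongDual ℝ X :=
    (WeakDual.toStrongDual : WeakDual ℝ X ≃ₗ[ℝ] StrongDual ℝ X).toLinearMap with he
  have himg : (fun y => WeakDual.toStrongDual y) ''
        ((Z ⊔ Submodule.span ℝ {xs} : Submodule ℝ (WeakDual ℝ X)) : Set (WeakDual ℝ X)) =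
      ((Z.map e ⊔ Submodule.span ℝ {e xs} : Submodule ℝ (StrongDual ℝ X)) :
        Set (StrongDual ℝ X)) := by
    have hmap : Submodule.map e (Z ⊔ Submodule.span ℝ {xs}) =
        Z.map e ⊔ Submodule.span ℝ {e xs} := by
      rw [Submodule.map_sup, Submodule.map_span, Set.image_singleton]
    rw [← hmap, Submodule.map_coe]
    rfl
  have hCc : IsClosed ((Z.map e : Submodule ℝ (StrongDual ℝ X)) :
      Set (StrongDual ℝ X)) := by
    have : ((Z.map e : Submodule ℝ (StrongDual ℝ X)) : Set (StrongDual ℝ X)) =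
        (fun y => WeakDual.toStrongDual y) '' (Z : Set (WeakDual ℝ X)) := rfl
    rw [this]
    exact hZc
  unfold NormClosed
  rw [himg]
  exact isClosed_sup_span_s1 (Z.map e) hCc (e xs)

end Aux

/-- If `Z ⊆ X*` is norming and norm-closed and `x* ∉ S₁(Z)`, then `x* ∉ Z`
and the functional `f(z + λx*) = λ` on `Y = Z ⊕ ℝx*` is weak-star sequentially continuous
but not weak-star continuous; in particular `(Y, w*)` fails the Mazur property and `X` is not
fully Mazur. -/
theorem statement1 (X : Type*) [NormedAddCommGroup X] [NormedSpace ℝ X] [CompleteSpace X]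
    (Z : Submodule ℝ (WeakDual ℝ X)) (hZn : IsNorming X Z) (hZc : NormClosed X Z)
    (xs : WeakDual ℝ X) (hxs : xs ∉ S1 X (Z : Set (WeakDual ℝ X))) :
    xs ∉ Z ∧
    (∀ f : ↥(Z ⊔ Submodule.span ℝ {xs}) →ₗ[ℝ] ℝ,
      (∀ (w : ↥(Z ⊔ Submodule.span ℝ {xs})) (z : WeakDual ℝ X) (l : ℝ),
        z ∈ Z → (w : WeakDual ℝ X) = z + l • xs → f w = l) →
      (WStarSeqCont X f ∧ ¬ Continuous f)) ∧
    ¬ MazurProp X (Z ⊔ Submodule.span ℝ {xs}) ∧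
    ¬ FullyMazur X := by
  have hxsZ : xs ∉ Z := fun h => hxs ⟨fun _ => xs, fun _ => h, tendsto_const_nhds⟩
  have hpart2 : ∀ f : ↥(Z ⊔ Submodule.span ℝ {xs}) →ₗ[ℝ] ℝ,
      (∀ (w : ↥(Z ⊔ Submodule.span ℝ {xs})) (z : WeakDual ℝ X) (l : ℝ),
        z ∈ Z → (w : WeakDual ℝ X) = z + l • xs → f w = l) →
      (WStarSeqCont X f ∧ ¬ Continuous f) :=
    fun f hf => ⟨f_seqcont Z xs hxs f hf, f_not_cont Z xs hZn f hf⟩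
  have hnM : ¬ MazurProp X (Z ⊔ Submodule.span ℝ {xs}) := by
    intro hM
    obtain ⟨f, hf⟩ := exists_f Z xs hxsZ
    obtain ⟨hsc, hnc⟩ := hpart2 f hf
    exact hnc (hM f hsc)
  refine ⟨hxsZ, hpart2, hnM, fun hFM => hnM (hFM _ ?_ ?_)⟩
  · exact isNorming_mono Z le_sup_left hZn
  · exact normClosed_sup Z xs hZc
end

section
/- If a real Banach space X is fully Mazur, then every closed linear subspace X₀ ⊆ X is fully Mazur. -/
open Filter Topology

lemma exists_eval_rep {X : Type*} [NormedAddCommGroup X] [NormedSpace ℝ X]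
    (W : Submodule ℝ (WeakDual ℝ X)) (g : W →ₗ[ℝ] ℝ) (hg : Continuous g) :
    ∃ x : X, ∀ w : W, g w = (w : WeakDual ℝ X) x := by
  have hU : (⇑g) ⁻¹' Metric.ball (0:ℝ) 1 ∈ 𝓝 (0 : W) := by
    have h0 : g 0 = 0 := map_zero g
    have := hg.tendsto 0
    rw [h0] at this
    exact this (Metric.ball_mem_nhds _ one_pos)
  rw [nhds_subtype_eq_comap, Filter.mem_comap] at hU
  obtain ⟨V, hV, hVsub⟩ := hU
  have hind : 𝓝 (0 : WeakDual ℝ X) =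
      Filter.comap (fun (v : WeakDual ℝ X) (x : X) => v x) (𝓝 (fun _ => 0 : X → ℝ)) := by
    have := (WeakBilin.isEmbedding (B := topDualPairing ℝ X)
      ContinuousLinearMap.coe_injective).toIsInducing.nhds_eq_comap (0 : WeakDual ℝ X)
    exact this
  rw [Submodule.coe_zero, hind, Filter.mem_comap] at hV
  obtain ⟨P, hP, hPsub⟩ := hV
  rw [nhds_pi, Filter.mem_pi'] at hP
  obtain ⟨I, t, ht, htsub⟩ := hP
  -- vanishing on I implies g = 0
  have hker0 : ∀ w : W, (∀ x ∈ I, (w : WeakDual ℝ X) x = 0) → g w = 0 := by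
    intro w hw
    by_contra hne
    set s : ℝ := 2 / |g w| with hs
    have habs : 0 < |g w| := abs_pos.mpr hne
    have hmem : s • w ∈ (⇑g) ⁻¹' Metric.ball (0:ℝ) 1 := by
      apply hVsub
      apply hPsub
      apply htsub
      intro x hxI
      have h2 : (s • (w : WeakDual ℝ X)) x = 0 := by
        show s • ((w : WeakDual ℝ X) x) = 0
        rw [hw x hxI, smul_zero]
      simp only [Submodule.coe_smul, h2]
      exact mem_of_mem_nhds (ht x)
    have h1 : |g (s • w)| < 1 := by
      simp only [Set.mem_preimage, Metric.mem_ball, dist_zero_right, Real.norm_eq_abs] at hmem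
      exact hmem
    rw [map_smul, smul_eq_mul, abs_mul, hs, abs_div, abs_abs,
      div_mul_cancel₀ _ (ne_of_gt habs)] at h1
    norm_num at h1
  -- linear algebra: factor through evaluations at points of I
  classical
  let E : X → (W →ₗ[ℝ] ℝ) := fun x =>
    { toFun := fun w => (w : WeakDual ℝ X) x
      map_add' := fun a b => rfl
      map_smul' := fun c a => rfl }
  let T : W →ₗ[ℝ] (↥I → ℝ) := LinearMap.pi (fun i => E i.1)
  have hkerT : LinearMap.ker T ≤ LinearMap.ker g := by
    intro w hw
    rw [LinearMap.mem_ker] at hw ⊢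
    apply hker0
    intro x hxI
    exact congrFun hw ⟨x, hxI⟩
  let q : (W ⧸ LinearMap.ker T) →ₗ[ℝ] ℝ := (LinearMap.ker T).liftQ g hkerT
  let e := T.quotKerEquivRange
  let hres : (LinearMap.range T) →ₗ[ℝ] ℝ := q.comp (e.symm : LinearMap.range T →ₗ[ℝ] _)
  obtain ⟨g', hg'⟩ := hres.exists_extend
  have hfact : ∀ w : W, g w = g' (T w) := by
    intro w
    have h1 : g w = q (Submodule.Quotient.mk w) := rfl
    have h2 : e (Submodule.Quotient.mk w) = ⟨T w, LinearMap.mem_range_self T w⟩ := by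
      apply Subtype.ext
      exact T.quotKerEquivRange_apply_mk w
    have h3 : (Submodule.Quotient.mk w : W ⧸ LinearMap.ker T)
        = e.symm ⟨T w, LinearMap.mem_range_self T w⟩ := by
      rw [← h2, LinearEquiv.symm_apply_apply]
    rw [h1, h3]
    have := congrArg (fun m => m ⟨T w, LinearMap.mem_range_self T w⟩) hg'
    exact this.symm
  set c : ↥I → ℝ := fun i => g' (fun j => if i = j then 1 else 0) with hc
  refine ⟨∑ i : ↥I, c i • (i.1 : X), fun w => ?_⟩
  rw [hfact w, LinearMap.pi_apply_eq_sum_univ g' (T w)]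
  rw [map_sum]
  apply Finset.sum_congr rfl
  intro i _
  have : (w : WeakDual ℝ X) (c i • (i.1 : X)) = c i * (w : WeakDual ℝ X) i.1 := by
    rw [map_smul]; rfl
  rw [this]
  show T w i • c i = _
  have hT : T w i = (w : WeakDual ℝ X) i.1 := rfl
  rw [hT, smul_eq_mul, mul_comm]


lemma exists_vanishing_functional {X : Type*} [NormedAddCommGroup X] [NormedSpace ℝ X]
    (X₀ : Submodule ℝ X) (hX₀ : IsClosed (X₀ : Set X)) (x : X) (hx : x ∉ X₀) :
    ∃ g : X →L[ℝ] ℝ, ‖g‖ ≤ 1 ∧ (∀ z ∈ X₀, g z = 0) ∧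
      g x = ‖(Submodule.Quotient.mk x : X ⧸ X₀)‖ ∧ 0 < g x := by
  haveI : IsClosed (X₀ : Set X) := hX₀
  have hmk : ∀ m : X, ‖(Submodule.Quotient.mk m : X ⧸ X₀)‖ ≤ ‖m‖ :=
    fun m => Submodule.Quotient.norm_mk_le X₀ m
  let mkC : X →L[ℝ] (X ⧸ X₀) := (X₀.mkQ).mkContinuous 1 (fun m => by simpa using hmk m)
  have hmkC : ∀ m : X, mkC m = (Submodule.Quotient.mk m : X ⧸ X₀) := fun m => rfl
  have hxne : (Submodule.Quotient.mk x : X ⧸ X₀) ≠ 0 := by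
    simpa [Submodule.Quotient.mk_eq_zero] using hx
  obtain ⟨g₀, hg₀norm, hg₀x⟩ := exists_dual_vector ℝ (Submodule.Quotient.mk x : X ⧸ X₀) (norm_ne_zero_iff.mpr hxne)
  have hval : g₀.comp mkC x = ‖(Submodule.Quotient.mk x : X ⧸ X₀)‖ := by
    exact hg₀x
  refine ⟨g₀.comp mkC, ?_, ?_, hval, ?_⟩
  · apply ContinuousLinearMap.opNorm_le_bound _ zero_le_one
    intro z
    calc ‖g₀ (mkC z)‖ ≤ ‖g₀‖ * ‖mkC z‖ := g₀.le_opNorm _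
      _ ≤ 1 * ‖z‖ := by
          rw [hg₀norm, one_mul, one_mul]
          simpa [hmkC] using hmk z
  · intro z hz
    have : mkC z = 0 := by
      rw [hmkC, Submodule.Quotient.mk_eq_zero]
      exact hz
    simp [ContinuousLinearMap.comp_apply, this]
  · rw [hval]
    exact norm_pos_iff.mpr hxne

noncomputable section AuxST3
variable {X : Type*} [NormedAddCommGroup X] [NormedSpace ℝ X]

/-- The restriction map `X* → X₀*` as a linear map between weak duals. -/
def restrictDualST3 (X₀ : Submodule ℝ X) : WeakDual ℝ X →ₗ[ℝ] WeakDual ℝ ↥X₀ where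
  toFun v := WeakDual.toStrongDual.symm ((WeakDual.toStrongDual v).comp X₀.subtypeL)
  map_add' a b := by apply DFunLike.ext; intro z; rfl
  map_smul' c a := by apply DFunLike.ext; intro z; rfl

lemma restrictDualST3_apply (X₀ : Submodule ℝ X) (v : WeakDual ℝ X) (z : ↥X₀) :
    restrictDualST3 X₀ v z = v (z : X) := rfl

lemma restrictDualST3_continuous (X₀ : Submodule ℝ X) :
    Continuous (restrictDualST3 X₀) := by
  apply WeakDual.continuous_of_continuous_eval
  intro z
  simp only [restrictDualST3_apply]
  exact WeakDual.eval_continuous (z : X)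

lemma dnorm_symm_eq (g : X →L[ℝ] ℝ) :
    dnorm X (WeakDual.toStrongDual.symm g) = ‖g‖ := by simp [dnorm]

lemma restrictDualST3_symm_mem (X₀ : Submodule ℝ X) (Y : Submodule ℝ (WeakDual ℝ ↥X₀))
    (g : X →L[ℝ] ℝ) (y : WeakDual ℝ ↥X₀) (hy : y ∈ Y)
    (hext : ∀ z : ↥X₀, g z = y z) :
    WeakDual.toStrongDual.symm g ∈ Y.comap (restrictDualST3 X₀) := by
  rw [Submodule.mem_comap]
  have : restrictDualST3 X₀ (WeakDual.toStrongDual.symm g) = y := by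
    apply DFunLike.ext
    intro z
    rw [restrictDualST3_apply]
    exact hext z
  rw [this]
  exact hy
end AuxST3

noncomputable section AuxST3b
variable {X : Type*} [NormedAddCommGroup X] [NormedSpace ℝ X]

lemma norming_comap (X₀ : Submodule ℝ X) (hX₀ : IsClosed (X₀ : Set X))
    (Y : Submodule ℝ (WeakDual ℝ ↥X₀)) (hYnorm : IsNorming ↥X₀ Y) :
    IsNorming X (Y.comap (restrictDualST3 X₀)) := by
  haveI : IsClosed (X₀ : Set X) := hX₀
  obtain ⟨c, hc, hcY⟩ := hYnorm
  have hc₁ : 0 < min c 1 := lt_min hc one_pos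
  have hc₁le : min c 1 ≤ 1 := min_le_right _ _
  have hc₁c : min c 1 ≤ c := min_le_left _ _
  set c₁ := min c 1
  refine ⟨c₁/4, by positivity, fun x => ?_⟩
  have hS0 : (0:ℝ) ∈ {r : ℝ | ∃ v ∈ Y.comap (restrictDualST3 X₀), dnorm X v ≤ 1 ∧ r = v x} :=
    ⟨0, Submodule.zero_mem _, by simp [dnorm], rfl⟩
  have hSbdd : BddAbove {r : ℝ | ∃ v ∈ Y.comap (restrictDualST3 X₀), dnorm X v ≤ 1 ∧ r = v x} := by
    refine ⟨‖x‖, fun r hr => ?_⟩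
    obtain ⟨v, hv, hv1, rfl⟩ := hr
    calc v x ≤ |v x| := le_abs_self _
      _ = ‖WeakDual.toStrongDual v x‖ := rfl
      _ ≤ ‖WeakDual.toStrongDual v‖ * ‖x‖ := (WeakDual.toStrongDual v).le_opNorm x
      _ ≤ 1 * ‖x‖ := mul_le_mul_of_nonneg_right hv1 (norm_nonneg x)
      _ = ‖x‖ := one_mul _
  by_cases hx0 : x = 0
  · subst hx0
    simpa using le_csSup hSbdd hS0
  have hxpos : 0 < ‖x‖ := norm_pos_iff.mpr hx0
  rcases le_or_gt (c₁/4 * ‖x‖) ‖(Submodule.Quotient.mk x : X ⧸ X₀)‖ with hcase | hcase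
  · -- a functional vanishing on X₀ does the job
    have hxnot : x ∉ X₀ := by
      intro hmem
      have hz : (Submodule.Quotient.mk x : X ⧸ X₀) = 0 :=
        (Submodule.Quotient.mk_eq_zero _).mpr hmem
      rw [hz, norm_zero] at hcase
      nlinarith
    obtain ⟨g, hg1, hgvan, hgx, hgpos⟩ := exists_vanishing_functional X₀ hX₀ x hxnot
    have hvY : WeakDual.toStrongDual.symm g ∈ Y.comap (restrictDualST3 X₀) := by
      apply restrictDualST3_symm_mem X₀ Y g 0 (Submodule.zero_mem _)
      intro z
      rw [hgvan _ z.2]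
      rfl
    have hmemS : g x ∈ {r : ℝ | ∃ v ∈ Y.comap (restrictDualST3 X₀), dnorm X v ≤ 1 ∧ r = v x} :=
      ⟨WeakDual.toStrongDual.symm g, hvY, by rw [dnorm_symm_eq]; exact hg1, rfl⟩
    calc c₁/4 * ‖x‖ ≤ ‖(Submodule.Quotient.mk x : X ⧸ X₀)‖ := hcase
      _ = g x := hgx.symm
      _ ≤ _ := le_csSup hSbdd hmemS
  · -- approximate x by an element of X₀, extend a functional from Y
    have hε : (0:ℝ) < c₁/4 * ‖x‖ - ‖(Submodule.Quotient.mk x : X ⧸ X₀)‖ := by linarith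
    obtain ⟨m, hmmk, hmlt⟩ := Submodule.Quotient.norm_mk_lt
      (Submodule.Quotient.mk x : X ⧸ X₀) hε
    have hmlt' : ‖m‖ < c₁/4 * ‖x‖ := by linarith
    have hxm : x - m ∈ X₀ := (Submodule.Quotient.eq X₀).mp hmmk.symm
    have hz₀big : (3:ℝ)/4 * ‖x‖ ≤ ‖(⟨x - m, hxm⟩ : ↥X₀)‖ := by
      have h0 : ‖(⟨x - m, hxm⟩ : ↥X₀)‖ = ‖x - m‖ := rfl
      have h1 : ‖x‖ - ‖m‖ ≤ ‖x - m‖ := norm_sub_norm_le x m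
      have h2 : c₁/4 * ‖x‖ ≤ 1/4 * ‖x‖ := by nlinarith
      rw [h0]
      linarith
    have hS₀0 : (0:ℝ) ∈ {r : ℝ | ∃ y ∈ Y, dnorm ↥X₀ y ≤ 1 ∧ r = y (⟨x - m, hxm⟩ : ↥X₀)} :=
      ⟨0, Y.zero_mem, by simp [dnorm], rfl⟩
    have hlt : c₁/2 * ‖x‖ <
        sSup {r : ℝ | ∃ y ∈ Y, dnorm ↥X₀ y ≤ 1 ∧ r = y (⟨x - m, hxm⟩ : ↥X₀)} := by
      have h3 := hcY (⟨x - m, hxm⟩ : ↥X₀)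
      have h2 : c₁ * ‖(⟨x - m, hxm⟩ : ↥X₀)‖ ≤ c * ‖(⟨x - m, hxm⟩ : ↥X₀)‖ :=
        mul_le_mul_of_nonneg_right hc₁c (norm_nonneg _)
      nlinarith
    obtain ⟨r₀, hr₀S, hr₀⟩ := exists_lt_of_lt_csSup ⟨0, hS₀0⟩ hlt
    obtain ⟨y, hyY, hy1, rfl⟩ := hr₀S
    obtain ⟨g, hgext, hgnorm⟩ := exists_extension_norm_eq X₀ (WeakDual.toStrongDual y)
    have hvY : WeakDual.toStrongDual.symm g ∈ Y.comap (restrictDualST3 X₀) := by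
      apply restrictDualST3_symm_mem X₀ Y g y hyY
      intro z
      exact hgext z
    have hv1 : dnorm X (WeakDual.toStrongDual.symm g) ≤ 1 := by
      rw [dnorm_symm_eq, hgnorm]
      exact hy1
    have hgnorm1 : ‖g‖ ≤ 1 := by rw [hgnorm]; exact hy1
    have hgm : |g m| ≤ c₁/4 * ‖x‖ := by
      have h1 : ‖g m‖ ≤ ‖g‖ * ‖m‖ := g.le_opNorm m
      have h3 : ‖g‖ * ‖m‖ ≤ 1 * ‖m‖ := mul_le_mul_of_nonneg_right hgnorm1 (norm_nonneg m)
      calc |g m| ≤ ‖g‖ * ‖m‖ := h1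
        _ ≤ 1 * ‖m‖ := h3
        _ = ‖m‖ := one_mul _
        _ ≤ c₁/4 * ‖x‖ := le_of_lt hmlt'
    have hgz₀ : g (x - m) = y (⟨x - m, hxm⟩ : ↥X₀) := hgext (⟨x - m, hxm⟩ : ↥X₀)
    have hvx : c₁/4 * ‖x‖ ≤ (WeakDual.toStrongDual.symm g : WeakDual ℝ X) x := by
      have happ : (WeakDual.toStrongDual.symm g : WeakDual ℝ X) x = g x := rfl
      have hsplit : g x = g (x - m) + g m := by
        rw [← map_add]
        congr 1
        abel
      have hneg : -(c₁/4 * ‖x‖) ≤ g m := by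
        have := neg_abs_le (g m)
        linarith
      rw [happ, hsplit, hgz₀]
      linarith
    have hmemS : (WeakDual.toStrongDual.symm g : WeakDual ℝ X) x ∈
        {r : ℝ | ∃ v ∈ Y.comap (restrictDualST3 X₀), dnorm X v ≤ 1 ∧ r = v x} :=
      ⟨WeakDual.toStrongDual.symm g, hvY, hv1, rfl⟩
    exact le_trans hvx (le_csSup hSbdd hmemS)
end AuxST3b

noncomputable section AuxST3c
variable {X : Type*} [NormedAddCommGroup X] [NormedSpace ℝ X]

lemma toNormedDual_restrictDualST3 (X₀ : Submodule ℝ X) (v : WeakDual ℝ X) :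
    WeakDual.toStrongDual (restrictDualST3 X₀ v)
      = (WeakDual.toStrongDual v).comp X₀.subtypeL :=
  LinearEquiv.apply_symm_apply _ _

set_option synthInstance.maxHeartbeats 1000000 in
lemma normclosed_comap (X₀ : Submodule ℝ X) (Y : Submodule ℝ (WeakDual ℝ ↥X₀))
    (hYclosed : NormClosed ↥X₀ Y) :
    NormClosed X (Y.comap (restrictDualST3 X₀)) := by
  have hPcont : Continuous (fun g : X →L[ℝ] ℝ => g.comp X₀.subtypeL) := by
    have hc := ((ContinuousLinearMap.compL ℝ ↥X₀ X ℝ).flip X₀.subtypeL).continuous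
    have he : ⇑((ContinuousLinearMap.compL ℝ ↥X₀ X ℝ).flip X₀.subtypeL)
        = fun g : X →L[ℝ] ℝ => g.comp X₀.subtypeL := by
      funext g
      rw [ContinuousLinearMap.flip_apply, ContinuousLinearMap.compL_apply]
    rwa [he] at hc
  have himg : ((fun y => WeakDual.toStrongDual y) ''
        ((Y.comap (restrictDualST3 X₀)) : Set (WeakDual ℝ X)))
      = (fun g : X →L[ℝ] ℝ => g.comp X₀.subtypeL) ⁻¹'
        ((fun y => WeakDual.toStrongDual y) '' (Y : Set (WeakDual ℝ ↥X₀))) := by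
    ext g
    constructor
    · rintro ⟨v, hv, rfl⟩
      exact ⟨restrictDualST3 X₀ v, hv, (toNormedDual_restrictDualST3 X₀ v).symm⟩
    · rintro ⟨y, hy, hyeq⟩
      refine ⟨WeakDual.toStrongDual.symm g, ?_, LinearEquiv.apply_symm_apply _ _⟩
      rw [SetLike.mem_coe, Submodule.mem_comap]
      have : WeakDual.toStrongDual (restrictDualST3 X₀ (WeakDual.toStrongDual.symm g))
          = WeakDual.toStrongDual y := by
        rw [toNormedDual_restrictDualST3, LinearEquiv.apply_symm_apply]
        exact hyeq.symm
      have h2 := WeakDual.toStrongDual.injective this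
      rw [h2]
      exact hy
  unfold NormClosed
  rw [himg]
  exact hYclosed.preimage hPcont
end AuxST3c

/-- If a Banach space `X` is fully Mazur, then every closed linear
subspace of `X` is fully Mazur. -/
theorem statement3 (X : Type*) [NormedAddCommGroup X] [NormedSpace ℝ X] [CompleteSpace X]
    (h : FullyMazur X) (X₀ : Submodule ℝ X) (hX₀ : IsClosed (X₀ : Set X)) :
    FullyMazur ↥X₀ := by
  intro Y hYnorm hYclosed f hf
  let Rres : ↥(Y.comap (restrictDualST3 X₀)) →ₗ[ℝ] ↥Y :=
    (restrictDualST3 X₀).restrict (p := Y.comap (restrictDualST3 X₀)) (q := Y)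
      (fun v hv => hv)
  let ftil : ↥(Y.comap (restrictDualST3 X₀)) →ₗ[ℝ] ℝ := f.comp Rres
  have hseq : WStarSeqCont X ftil := by
    intro u y hu
    have hT : Tendsto (fun n => ((Rres (u n) : WeakDual ℝ ↥X₀))) atTop
        (𝓝 ((Rres y : WeakDual ℝ ↥X₀))) := by
      have h1 : ∀ w : ↥(Y.comap (restrictDualST3 X₀)),
          ((Rres w : WeakDual ℝ ↥X₀)) = restrictDualST3 X₀ (w : WeakDual ℝ X) :=
        fun w => rfl
      simp only [h1]
      exact ((restrictDualST3_continuous X₀).tendsto _).comp hu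
    exact hf _ _ hT
  have hcont : Continuous ftil :=
    h (Y.comap (restrictDualST3 X₀)) (norming_comap X₀ hX₀ Y hYnorm)
      (normclosed_comap X₀ Y hYclosed) ftil hseq
  obtain ⟨x, hx⟩ := exists_eval_rep _ ftil hcont
  have hftil0 : ∀ (v : WeakDual ℝ X) (hv : v ∈ Y.comap (restrictDualST3 X₀)),
      ftil ⟨v, hv⟩ = f ⟨restrictDualST3 X₀ v, hv⟩ := fun v hv => rfl
  have hxmem : x ∈ X₀ := by
    by_contra hxnot
    obtain ⟨g, hg1, hgvan, hgx, hgpos⟩ := exists_vanishing_functional X₀ hX₀ x hxnot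
    have hvY : WeakDual.toStrongDual.symm g ∈ Y.comap (restrictDualST3 X₀) := by
      apply restrictDualST3_symm_mem X₀ Y g 0 (Submodule.zero_mem _)
      intro z
      rw [hgvan _ z.2]
      rfl
    have h1 := hx ⟨_, hvY⟩
    have h2 : restrictDualST3 X₀ (WeakDual.toStrongDual.symm g) = 0 := by
      apply DFunLike.ext
      intro z
      rw [restrictDualST3_apply]
      have hz : (WeakDual.toStrongDual.symm g : WeakDual ℝ X) (z : X) = g (z : X) := rfl
      rw [hz, hgvan _ z.2]
      rfl
    have h3 : ftil ⟨_, hvY⟩ = 0 := by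
      rw [hftil0]
      have heq : (⟨restrictDualST3 X₀ (WeakDual.toStrongDual.symm g), hvY⟩ : ↥Y) = 0 :=
        Subtype.ext h2
      rw [heq, map_zero]
    rw [h3] at h1
    have h4 : ((⟨WeakDual.toStrongDual.symm g, hvY⟩ :
        ↥(Y.comap (restrictDualST3 X₀))) : WeakDual ℝ X) x = g x := rfl
    rw [h4] at h1
    linarith
  have hrep : ∀ y : ↥Y, f y = (y : WeakDual ℝ ↥X₀) (⟨x, hxmem⟩ : ↥X₀) := by
    intro y
    obtain ⟨g, hgext, hgnorm⟩ :=
      exists_extension_norm_eq X₀ (WeakDual.toStrongDual (y : WeakDual ℝ ↥X₀))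
    have hvY : WeakDual.toStrongDual.symm g ∈ Y.comap (restrictDualST3 X₀) :=
      restrictDualST3_symm_mem X₀ Y g y y.2 (fun z => hgext z)
    have hR : restrictDualST3 X₀ (WeakDual.toStrongDual.symm g) = (y : WeakDual ℝ ↥X₀) := by
      apply DFunLike.ext
      intro z
      rw [restrictDualST3_apply]
      exact hgext z
    have h1 := hx ⟨_, hvY⟩
    have h2 : ftil ⟨_, hvY⟩ = f y := by
      rw [hftil0]
      congr 1
      exact Subtype.ext hR
    have h3 : ((⟨WeakDual.toStrongDual.symm g, hvY⟩ :
        ↥(Y.comap (restrictDualST3 X₀))) : WeakDual ℝ X) x = g x := rfl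
    rw [h2, h3] at h1
    rw [h1]
    exact hgext (⟨x, hxmem⟩ : ↥X₀)
  have hfun : (⇑f) = fun y : ↥Y => (y : WeakDual ℝ ↥X₀) (⟨x, hxmem⟩ : ↥X₀) := funext hrep
  rw [hfun]
  exact (WeakDual.eval_continuous _).comp continuous_subtype_val
end

section
/- If a real Banach space X is fully Mackey complete, then every closed linear subspace X₀ ⊆ X is fully Mackey complete. -/
open Filter Topology

section AuxDefs
variable {X : Type*} [NormedAddCommGroup X] [NormedSpace ℝ X]

/-- Restriction of functionals to a subspace, as a linear map between weak duals. -/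
noncomputable def restrictD (X₀ : Submodule ℝ X) : WeakDual ℝ X →ₗ[ℝ] WeakDual ℝ ↥X₀ where
  toFun z := StrongDual.toWeakDual ((WeakDual.toStrongDual z).comp X₀.subtypeL)
  map_add' a b := by
    apply ContinuousLinearMap.ext
    intro m
    rfl
  map_smul' a b := by
    apply ContinuousLinearMap.ext
    intro m
    rfl

lemma restrictD_apply (X₀ : Submodule ℝ X) (z : WeakDual ℝ X) (m : ↥X₀) :
    restrictD X₀ z m = z (m : X) := rfl

lemma restrictD_continuous (X₀ : Submodule ℝ X) : Continuous (restrictD X₀) :=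
  WeakDual.continuous_of_continuous_eval fun m => WeakDual.eval_continuous ((m : X))

end AuxDefs
lemma aux_vanishing {X : Type*} [NormedAddCommGroup X] [NormedSpace ℝ X]
    (X₀ : Submodule ℝ X) (hX₀ : IsClosed (X₀ : Set X)) {x : X} (hx : x ∉ X₀) :
    ∃ φ : X →L[ℝ] ℝ, ‖φ‖ ≤ 1 ∧ (∀ m : X₀, φ m = 0) ∧
      φ x = ‖(Submodule.Quotient.mk x : X ⧸ X₀)‖ := by
  haveI : IsClosed (X₀ : Set X) := hX₀
  have hne : (Submodule.Quotient.mk x : X ⧸ X₀) ≠ 0 := by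
    intro hcon
    exact hx ((Submodule.Quotient.mk_eq_zero X₀).mp hcon)
  obtain ⟨g, hg1, hg2⟩ := exists_dual_vector ℝ (Submodule.Quotient.mk x : X ⧸ X₀) (norm_ne_zero_iff.mpr hne)
  let mkCLM : X →L[ℝ] (X ⧸ X₀) :=
    LinearMap.mkContinuous X₀.mkQ 1 (fun m => by
      simpa using Submodule.Quotient.norm_mk_le X₀ m)
  refine ⟨g.comp mkCLM, ?_, ?_, ?_⟩
  · apply ContinuousLinearMap.opNorm_le_bound _ zero_le_one
    intro m
    calc ‖g (mkCLM m)‖ ≤ ‖g‖ * ‖mkCLM m‖ := g.le_opNorm _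
    _ ≤ 1 * ‖m‖ := by
        rw [hg1, one_mul, one_mul]
        exact Submodule.Quotient.norm_mk_le X₀ m
  · intro m
    have : mkCLM (m : X) = 0 := by
      simp only [mkCLM, LinearMap.mkContinuous_apply, Submodule.mkQ_apply,
        Submodule.Quotient.mk_eq_zero]
      exact m.2
    simp [this]
  · exact hg2

lemma aux_norming {X : Type*} [NormedAddCommGroup X] [NormedSpace ℝ X]
    (X₀ : Submodule ℝ X) (hX₀ : IsClosed (X₀ : Set X))
    (Y : Submodule ℝ (WeakDual ℝ ↥X₀)) (hY : IsNorming ↥X₀ Y) :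
    IsNorming X (Y.comap (restrictD X₀)) := by
  haveI : IsClosed (X₀ : Set X) := hX₀
  obtain ⟨c₀, hc₀, hcnorm⟩ := hY
  set c : ℝ := min c₀ 1 with hcdef
  have hc : 0 < c := lt_min hc₀ one_pos
  have hc1 : c ≤ 1 := min_le_right _ _
  have hcc₀ : c ≤ c₀ := min_le_left _ _
  set Z : Submodule ℝ (WeakDual ℝ X) := Y.comap (restrictD X₀) with hZdef
  refine ⟨c / 4, by positivity, ?_⟩
  intro x
  set S : Set ℝ := {r : ℝ | ∃ z ∈ Z, dnorm X z ≤ 1 ∧ r = z x} with hSdef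
  have hSbdd : BddAbove S := by
    refine ⟨‖x‖, ?_⟩
    rintro r ⟨z, _, hz1, rfl⟩
    calc (z : WeakDual ℝ X) x ≤ ‖(WeakDual.toStrongDual z) x‖ := le_abs_self _
    _ ≤ ‖WeakDual.toStrongDual z‖ * ‖x‖ := ContinuousLinearMap.le_opNorm _ _
    _ ≤ 1 * ‖x‖ := by
        apply mul_le_mul_of_nonneg_right hz1 (norm_nonneg _)
    _ = ‖x‖ := one_mul _
  have hS0 : (0 : ℝ) ∈ S := ⟨0, Z.zero_mem, by simp [dnorm], rfl⟩
  -- helper: any z in Z with dnorm ≤ 1 gives z x ≤ sSup S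
  have hle : ∀ z : WeakDual ℝ X, z ∈ Z → dnorm X z ≤ 1 → z x ≤ sSup S := by
    intro z hz hz1
    exact le_csSup hSbdd ⟨z, hz, hz1, rfl⟩
  rcases eq_or_lt_of_le (norm_nonneg x) with hx0 | hx0
  · rw [← hx0, mul_zero]
    exact le_csSup hSbdd hS0
  set d : ℝ := ‖(Submodule.Quotient.mk x : X ⧸ X₀)‖ with hddef
  by_cases hcase : c / 4 * ‖x‖ ≤ d
  · -- separation case
    have hdpos : 0 < d := lt_of_lt_of_le (by positivity) hcase
    have hxnot : x ∉ X₀ := by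
      intro hmem
      rw [hddef] at hdpos
      rw [show (Submodule.Quotient.mk x : X ⧸ X₀) = 0 from
        (Submodule.Quotient.mk_eq_zero X₀).mpr hmem] at hdpos
      simp at hdpos
    obtain ⟨φ, hφ1, hφ0, hφx⟩ := aux_vanishing X₀ hX₀ hxnot
    have hφZ : StrongDual.toWeakDual φ ∈ Z := by
      rw [hZdef, Submodule.mem_comap]
      have : restrictD X₀ (StrongDual.toWeakDual φ) = 0 := by
        apply ContinuousLinearMap.ext
        intro m
        exact hφ0 m
      rw [this]
      exact Y.zero_mem
    have := hle _ hφZ (by simpa [dnorm] using hφ1)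
    calc c / 4 * ‖x‖ ≤ d := hcase
    _ = (StrongDual.toWeakDual φ : WeakDual ℝ X) x := hφx.symm
    _ ≤ sSup S := this
  · push_neg at hcase
    -- find a good representative
    have hd0 : (0:ℝ) ≤ d := norm_nonneg _
    have hεpos : 0 < c / 4 * ‖x‖ - d := by linarith
    obtain ⟨m, hmmk, hmnorm⟩ :=
      Submodule.Quotient.norm_mk_lt (Submodule.Quotient.mk x : X ⧸ X₀) hεpos
    have hmlt : ‖m‖ < c / 4 * ‖x‖ := by
      rw [← hddef] at hmnorm; linarith
    have hxm : x - m ∈ X₀ := by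
      rw [← Submodule.Quotient.eq]
      exact hmmk.symm
    set x₀ : ↥X₀ := ⟨x - m, hxm⟩ with hx₀def
    have hx₀norm : ‖x₀‖ = ‖x - m‖ := rfl
    have hx₀lb : (3:ℝ) / 4 * ‖x‖ ≤ ‖x₀‖ := by
      rw [hx₀norm]
      have h1 : ‖x‖ - ‖m‖ ≤ ‖x - m‖ := by
        have := norm_sub_norm_le x m
        linarith [le_abs_self (‖x‖ - ‖m‖)]
      nlinarith [hc1, hc, norm_nonneg m]
    -- norming of Y at x₀
    set S₀ : Set ℝ := {r : ℝ | ∃ y ∈ Y, dnorm ↥X₀ y ≤ 1 ∧ r = y x₀} with hS₀def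
    have hS₀bdd : BddAbove S₀ := by
      refine ⟨‖x₀‖, ?_⟩
      rintro r ⟨y, _, hy1, rfl⟩
      calc (y : WeakDual ℝ ↥X₀) x₀ ≤ ‖(WeakDual.toStrongDual y) x₀‖ := le_abs_self _
      _ ≤ ‖WeakDual.toStrongDual y‖ * ‖x₀‖ := ContinuousLinearMap.le_opNorm _ _
      _ ≤ 1 * ‖x₀‖ := mul_le_mul_of_nonneg_right hy1 (norm_nonneg _)
      _ = ‖x₀‖ := one_mul _
    have hS₀ne : S₀.Nonempty := ⟨0, 0, Y.zero_mem, by simp [dnorm], rfl⟩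
    have hlow : c * ‖x₀‖ - c / 8 * ‖x‖ < sSup S₀ := by
      have h1 : c₀ * ‖x₀‖ ≤ sSup S₀ := hcnorm x₀
      have h2 : c * ‖x₀‖ ≤ c₀ * ‖x₀‖ :=
        mul_le_mul_of_nonneg_right hcc₀ (norm_nonneg _)
      have h3 : 0 < c / 8 * ‖x‖ := by positivity
      linarith
    obtain ⟨r, hrS₀, hrgt⟩ := exists_lt_of_lt_csSup hS₀ne hlow
    obtain ⟨y, hyY, hy1, hry⟩ := hrS₀
    -- extend y to all of X
    obtain ⟨z, hzext, hznorm⟩ :=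
      exists_extension_norm_eq X₀ (WeakDual.toStrongDual y)
    have hz1 : ‖z‖ ≤ 1 := by rw [hznorm]; exact hy1
    have hzZ : StrongDual.toWeakDual z ∈ Z := by
      rw [hZdef, Submodule.mem_comap]
      have : restrictD X₀ (StrongDual.toWeakDual z) = y := by
        apply ContinuousLinearMap.ext
        intro m'
        exact hzext m'
      rw [this]
      exact hyY
    have hkey := hle _ hzZ (by simpa [dnorm] using hz1)
    -- estimate z x
    have hzx : c / 4 * ‖x‖ ≤ (StrongDual.toWeakDual z : WeakDual ℝ X) x := by
      have hsplit : (StrongDual.toWeakDual z : WeakDual ℝ X) x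
          = z m + z (x - m) := by
        show z x = z m + z (x - m)
        rw [← map_add]
        congr 1
        abel
      have hzx₀ : z (x - m) = r := by
        rw [hry]
        exact hzext x₀
      have hzm : |z m| ≤ ‖m‖ := by
        calc |z m| ≤ ‖z‖ * ‖m‖ := z.le_opNorm m
        _ ≤ 1 * ‖m‖ := mul_le_mul_of_nonneg_right hz1 (norm_nonneg _)
        _ = ‖m‖ := one_mul _
      have hzm' : -‖m‖ ≤ z m := by
        have := abs_le.mp hzm
        linarith [this.1]
      rw [hsplit, hzx₀]
      have h6 : c * ((3:ℝ)/4 * ‖x‖) ≤ c * ‖x₀‖ :=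
        mul_le_mul_of_nonneg_left hx₀lb hc.le
      have h7 : (0:ℝ) ≤ c * ‖x‖ := (mul_pos hc hx0).le
      linarith [hzm', hmlt, hrgt, h6, h7]
    exact le_trans hzx hkey

lemma aux_normclosed {X : Type*} [NormedAddCommGroup X] [NormedSpace ℝ X]
    (X₀ : Submodule ℝ X) (Y : Submodule ℝ (WeakDual ℝ ↥X₀)) (hY : NormClosed ↥X₀ Y) :
    NormClosed X (Y.comap (restrictD X₀)) := by
  set T : StrongDual ℝ X → StrongDual ℝ ↥X₀ :=
    fun z' => z'.comp X₀.subtypeL with hTdef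
  have hset : ((fun y => WeakDual.toStrongDual y) '' ((Y.comap (restrictD X₀)) : Set (WeakDual ℝ X)))
      = T ⁻¹' ((fun y => WeakDual.toStrongDual y) '' (Y : Set (WeakDual ℝ ↥X₀))) := by
    ext z'
    constructor
    · rintro ⟨w, hw, rfl⟩
      exact ⟨restrictD X₀ w, Submodule.mem_comap.mp hw, rfl⟩
    · rintro ⟨w, hw, heq⟩
      refine ⟨StrongDual.toWeakDual z', ?_, rfl⟩
      rw [SetLike.mem_coe, Submodule.mem_comap]
      have : restrictD X₀ (StrongDual.toWeakDual z') = w := by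
        apply ContinuousLinearMap.ext
        intro m
        have := congrFun (congrArg DFunLike.coe heq) m
        exact this.symm
      rw [this]
      exact hw
  rw [NormClosed, hset]
  have hTcont : Continuous T := by
    refine LipschitzWith.continuous (K := 1) (f := T) ?_
    apply LipschitzWith.of_dist_le_mul
    intro a b
    rw [dist_eq_norm, dist_eq_norm]
    have h1 : T a - T b = (a - b).comp X₀.subtypeL := by
      rw [hTdef]
      simp [ContinuousLinearMap.sub_comp]
    rw [h1]
    calc ‖(a - b).comp X₀.subtypeL‖ ≤ ‖a - b‖ * ‖X₀.subtypeL‖ :=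
      ContinuousLinearMap.opNorm_comp_le _ _
    _ ≤ ‖a - b‖ * 1 := by
        apply mul_le_mul_of_nonneg_left (Submodule.norm_subtypeL_le X₀) (norm_nonneg _)
    _ = 1 * ‖a - b‖ := by ring
  exact hY.preimage hTcont
lemma aux_exists_point {X : Type*} [NormedAddCommGroup X] [NormedSpace ℝ X]
    (Z : Submodule ℝ (WeakDual ℝ X)) (g : Z →ₗ[ℝ] ℝ) (hg : Continuous g) :
    ∃ x : X, ∀ z : Z, g z = (z : WeakDual ℝ X) x := by
  have h1 : (⇑g) ⁻¹' (Set.Ioo (-1 : ℝ) 1) ∈ 𝓝 (0 : Z) := by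
    have h2 : Set.Ioo (-1 : ℝ) 1 ∈ 𝓝 (g 0) := by
      rw [map_zero]
      exact Ioo_mem_nhds (by norm_num) (by norm_num)
    exact hg.continuousAt.preimage_mem_nhds h2
  rw [nhds_subtype] at h1
  obtain ⟨U, hU, hUsub⟩ := Filter.mem_comap.mp h1
  simp only [ZeroMemClass.coe_zero] at hU
  have hnhds : 𝓝 (0 : WeakDual ℝ X) =
      Filter.comap (fun (z : WeakDual ℝ X) (x : X) => z x) (𝓝 0) :=
    nhds_induced _ _
  rw [hnhds] at hU
  obtain ⟨V, hV, hVsub⟩ := Filter.mem_comap.mp hU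
  rw [nhds_pi] at hV
  obtain ⟨I, hIfin, t, ht, hsub⟩ := Filter.mem_pi.mp hV
  -- Key: if z ∈ Z and z x = 0 for all x ∈ I, then g z = 0
  have key : ∀ z : Z, (∀ x ∈ I, (z : WeakDual ℝ X) x = 0) → g z = 0 := by
    intro z hz
    by_contra hne
    have hpos : 0 < |g z| := abs_pos.mpr hne
    obtain ⟨n, hn⟩ := exists_nat_gt (1 / |g z|)
    have hpos' : (0:ℝ) < (n:ℝ) + 1 := by positivity
    have habs : |g z| < 1 / ((n:ℝ) + 1) := by
      have hmem : (((n:ℝ)+1) • z : Z).val ∈ U := by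
        apply hVsub
        apply hsub
        intro x hx
        have hzero : ((((n:ℝ)+1) • z : Z) : WeakDual ℝ X) x = 0 := by
          have h5 := hz x hx
          rw [show ((((n:ℝ)+1) • z : Z) : WeakDual ℝ X) x
            = ((n:ℝ)+1) • ((z : WeakDual ℝ X) x) from rfl, h5, smul_zero]
        show (fun (z : WeakDual ℝ X) (x : X) => z x) ((((n:ℝ)+1) • z : Z) : WeakDual ℝ X) x ∈ t x
        simp only [hzero]
        simpa using mem_of_mem_nhds (ht x)
      have h3 := hUsub hmem
      simp only [Set.mem_preimage, Set.mem_Ioo, map_smul, smul_eq_mul] at h3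
      have h4 : |((n:ℝ)+1) * g z| < 1 := abs_lt.mpr h3
      rw [abs_mul, abs_of_pos hpos'] at h4
      rw [lt_div_iff₀ hpos']
      linarith
    have h1n : 1 / ((n:ℝ) + 1) < |g z| := by
      rw [div_lt_iff₀ hpos']
      rw [div_lt_iff₀ hpos] at hn
      nlinarith
    exact absurd habs (not_lt.mpr h1n.le)
  classical
  set s : Finset X := hIfin.toFinset with hs
  haveI : Fintype ↑(↑s : Set X) := FinsetCoe.fintype s
  let L : ↑(↑s : Set X) → (Z →ₗ[ℝ] ℝ) := fun i =>
    { toFun := fun z => (z : WeakDual ℝ X) i.val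
      map_add' := fun a b => rfl
      map_smul' := fun a b => rfl }
  have hker : ⨅ i, LinearMap.ker (L i) ≤ LinearMap.ker g := by
    intro z hz
    rw [LinearMap.mem_ker]
    apply key
    intro x hx
    have hxs : x ∈ (↑s : Set X) := by simpa [hs] using hx
    have := (Submodule.mem_iInf _).mp hz ⟨x, hxs⟩
    exact this
  have hspan := mem_span_of_iInf_ker_le_ker hker
  obtain ⟨c, hc⟩ := (Submodule.mem_span_range_iff_exists_fun ℝ).mp hspan
  refine ⟨∑ i : ↑(↑s : Set X), c i • (i.val : X), fun z => ?_⟩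
  have hgz : g z = ∑ i : ↑(↑s : Set X), c i * (z : WeakDual ℝ X) i.val := by
    rw [← hc]
    simp [L]
    rfl
  rw [hgz]
  rw [map_sum (z : WeakDual ℝ X)]
  congr 1
  ext i
  rw [map_smul]
  simp

/-- If a Banach space `X` is fully Mackey complete, then every closed linear
subspace of `X` is fully Mackey complete. -/
theorem statement4 (X : Type*) [NormedAddCommGroup X] [NormedSpace ℝ X] [CompleteSpace X]
    (h : FullyMackeyComplete X) (X₀ : Submodule ℝ X) (hX₀ : IsClosed (X₀ : Set X)) :
    FullyMackeyComplete ↥X₀ := by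
  intro Y hYnorm hYclosed f hf
  classical
  set R : WeakDual ℝ X →ₗ[ℝ] WeakDual ℝ ↥X₀ := restrictD X₀ with hRdef
  set Z : Submodule ℝ (WeakDual ℝ X) := Y.comap R with hZdef
  -- the lifted functional
  set φ : Z →ₗ[ℝ] Y :=
    (R.domRestrict Z).codRestrict Y (fun z => Submodule.mem_comap.mp z.2) with hφdef
  set g : Z →ₗ[ℝ] ℝ := f.comp φ with hgdef
  have hφcont : Continuous φ := by
    apply Continuous.subtype_mk
    exact (restrictD_continuous X₀).comp continuous_subtype_val
  -- g satisfies the Grothendieck condition on X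
  have hg : GrothendieckCond X g := by
    intro K hKZ hKconv hKbal hKcomp
    have himg : (⇑R '' K) ⊆ (Y : Set (WeakDual ℝ ↥X₀)) := by
      rintro _ ⟨k, hk, rfl⟩
      exact Submodule.mem_comap.mp (hKZ hk)
    have hconv : Convex ℝ (⇑R '' K) := hKconv.linear_image R
    have hbal : Balanced ℝ (⇑R '' K) := by
      intro a ha
      rintro w hw
      obtain ⟨v, hv, rfl⟩ := hw
      obtain ⟨k, hk, rfl⟩ := hv
      refine ⟨a • k, hKbal a ha (Set.smul_mem_smul_set hk), (map_smul R a k).symm⟩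
    have hcomp : IsCompact (⇑R '' K) := hKcomp.image (restrictD_continuous X₀)
    have hfK := hf (⇑R '' K) himg hconv hbal hcomp
    have hmaps : Set.MapsTo (⇑φ) (Subtype.val ⁻¹' K) (Subtype.val ⁻¹' (⇑R '' K)) := by
      intro z hz
      exact Set.mem_preimage.mpr ⟨z.val, hz, rfl⟩
    exact hfK.comp hφcont.continuousOn hmaps
  -- apply full Mackey completeness of X
  have hZnorm : IsNorming X Z := aux_norming X₀ hX₀ Y hYnorm
  have hZclosed : NormClosed X Z := aux_normclosed X₀ Y hYclosed
  have hgcont : Continuous g := h Z hZnorm hZclosed g hg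
  -- represent g by a point of X
  obtain ⟨x, hx⟩ := aux_exists_point Z g hgcont
  -- x belongs to X₀
  have hxX₀ : x ∈ X₀ := by
    by_contra hxn
    obtain ⟨ψ, hψ1, hψ0, hψx⟩ := aux_vanishing X₀ hX₀ hxn
    have hψZ : StrongDual.toWeakDual ψ ∈ Z := by
      rw [hZdef, Submodule.mem_comap]
      have hzero : R (StrongDual.toWeakDual ψ) = 0 := by
        apply ContinuousLinearMap.ext
        intro m
        exact hψ0 m
      rw [hzero]
      exact Y.zero_mem
    have h1 : g ⟨_, hψZ⟩ = (StrongDual.toWeakDual ψ : WeakDual ℝ X) x := hx _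
    have h2 : g ⟨_, hψZ⟩ = 0 := by
      rw [hgdef]
      show f (φ ⟨_, hψZ⟩) = 0
      have : φ ⟨_, hψZ⟩ = 0 := by
        apply Subtype.ext
        show R (StrongDual.toWeakDual ψ) = 0
        apply ContinuousLinearMap.ext
        intro m
        exact hψ0 m
      rw [this, map_zero]
    have h3 : (StrongDual.toWeakDual ψ : WeakDual ℝ X) x = ψ x := rfl
    have hd : (0:ℝ) < ‖(Submodule.Quotient.mk x : X ⧸ X₀)‖ := by
      haveI : IsClosed (X₀ : Set X) := hX₀
      rw [norm_pos_iff]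
      intro hcon
      exact hxn ((Submodule.Quotient.mk_eq_zero X₀).mp hcon)
    rw [h2, h3, hψx] at h1
    linarith
  set x₀ : ↥X₀ := ⟨x, hxX₀⟩ with hx₀def
  -- f is evaluation at x₀
  have hfeval : ∀ y : Y, f y = (y : WeakDual ℝ ↥X₀) x₀ := by
    intro y
    obtain ⟨z, hzext, hznorm⟩ :=
      exists_extension_norm_eq X₀ (WeakDual.toStrongDual (y : WeakDual ℝ ↥X₀))
    have hres : R (StrongDual.toWeakDual z) = (y : WeakDual ℝ ↥X₀) := by
      apply ContinuousLinearMap.ext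
      intro m
      exact hzext m
    have hzZ : StrongDual.toWeakDual z ∈ Z := by
      rw [hZdef, Submodule.mem_comap, hres]
      exact y.2
    have h1 : g ⟨_, hzZ⟩ = (StrongDual.toWeakDual z : WeakDual ℝ X) x := hx _
    have h2 : g ⟨_, hzZ⟩ = f y := by
      rw [hgdef]
      show f (φ ⟨_, hzZ⟩) = f y
      congr 1
      apply Subtype.ext
      exact hres
    have h3 : (StrongDual.toWeakDual z : WeakDual ℝ X) x = z x := rfl
    have h4 : z x = (y : WeakDual ℝ ↥X₀) x₀ := by
      have := hzext x₀
      rw [this]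
      rfl
    rw [h2, h3, h4] at h1
    exact h1
  have : ⇑f = (fun w : WeakDual ℝ ↥X₀ => w x₀) ∘ (Subtype.val : Y → WeakDual ℝ ↥X₀) := by
    funext y
    exact hfeval y
  rw [this]
  exact (WeakDual.eval_continuous x₀).comp continuous_subtype_val
end

section
/- Let X be a real Banach space and let Y ⊆ X* be a w*-dense subspace such that: (i) every linear functional f : Y → ℝ whose restriction to each absolutely convex w*-compact subset of Y is w*-continuous is itself w*-continuous; and (ii) for every absolutely convex w*-compact set K ⊆ Y, every convex w*-sequentially closed subset of K is w*-closed. Then (Y, w*) has the Mazur property. -/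
open Filter Topology

/-- Let `Y ⊆ X*` be weak-star dense satisfying (i) Grothendieck's
completeness condition for `(X, μ(X,Y))` and (ii) for every absolutely convex weak-star
compact `K ⊆ Y`, every convex weak-star sequentially closed subset of `K` is weak-star
closed. Then `(Y, w*)` has the Mazur property. -/
theorem statement6 (X : Type*) [NormedAddCommGroup X] [NormedSpace ℝ X] [CompleteSpace X]
    (Y : Submodule ℝ (WeakDual ℝ X)) (hYd : Dense (Y : Set (WeakDual ℝ X)))
    (hi : MackeyComplete X Y)
    (hii : ∀ K : Set (WeakDual ℝ X), K ⊆ (Y : Set (WeakDual ℝ X)) → Convex ℝ K →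
      Balanced ℝ K → IsCompact K →
      ∀ C : Set (WeakDual ℝ X), C ⊆ K → Convex ℝ C →
        (∀ (u : ℕ → WeakDual ℝ X) (z : WeakDual ℝ X),
          (∀ n, u n ∈ C) → Tendsto u atTop (𝓝 z) → z ∈ C) →
        IsClosed C) :
    MazurProp X Y := by
  intro f hf
  apply hi
  intro K hKY hKconv hKbal hKcomp
  have hK_closed : IsClosed K := hKcomp.isClosed
  -- Closedness of sublevel sets of sequentially continuous linear functionals on K
  have hcl : ∀ (g : Y →ₗ[ℝ] ℝ), WStarSeqCont X g → ∀ a : ℝ,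
      IsClosed (Subtype.val '' {y : Y | (y : WeakDual ℝ X) ∈ K ∧ g y ≤ a}) := by
    intro g hg a
    set S : Set Y := {y : Y | (y : WeakDual ℝ X) ∈ K ∧ g y ≤ a} with hS
    have hSconv : Convex ℝ S := by
      have h1 : Convex ℝ (Y.subtype ⁻¹' K) := hKconv.linear_preimage Y.subtype
      have h2 : Convex ℝ {y : Y | g y ≤ a} := convex_halfSpace_le g.isLinear a
      exact h1.inter h2
    apply hii K hKY hKconv hKbal hKcomp
    · rintro z ⟨y, hy, rfl⟩; exact hy.1
    · exact hSconv.linear_image Y.subtype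
    · intro u z hu hz
      have hw : ∀ n, ∃ y : Y, y ∈ S ∧ (y : WeakDual ℝ X) = u n := by
        intro n; obtain ⟨y, hy, hyu⟩ := hu n; exact ⟨y, hy, hyu⟩
      choose w hwS hwu using hw
      have huK : ∀ n, u n ∈ K := fun n => (hwu n) ▸ (hwS n).1
      have hzK : z ∈ K := hK_closed.mem_of_tendsto hz (Filter.Eventually.of_forall huK)
      have hzY : z ∈ Y := hKY hzK
      set zy : Y := ⟨z, hzY⟩
      have htend : Tendsto (fun n => ((w n : Y) : WeakDual ℝ X)) atTop (𝓝 (zy : WeakDual ℝ X)) := by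
        simpa [hwu] using hz
      have hgt := hg w zy htend
      have hle : g zy ≤ a := le_of_tendsto hgt (Filter.Eventually.of_forall fun n => (hwS n).2)
      exact ⟨zy, ⟨hzK, hle⟩, rfl⟩
  have hfneg : WStarSeqCont X (-f) := by
    intro u y h
    simpa using (hf u y h).neg
  intro x hx
  rw [ContinuousWithinAt, tendsto_order]
  constructor
  · intro b hb
    have hcl' := hcl f hf b
    have hxU : (x : WeakDual ℝ X) ∈ (Subtype.val '' {y : Y | (y : WeakDual ℝ X) ∈ K ∧ f y ≤ b})ᶜ := by
      rintro ⟨y, ⟨hyK, hyb⟩, hyx⟩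
      have : y = x := Subtype.ext hyx
      rw [this] at hyb
      exact absurd hyb (not_le.mpr hb)
    have hV : Subtype.val ⁻¹' (Subtype.val '' {y : Y | (y : WeakDual ℝ X) ∈ K ∧ f y ≤ b})ᶜ ∈ 𝓝 x :=
      (hcl'.isOpen_compl.preimage continuous_subtype_val).mem_nhds hxU
    filter_upwards [nhdsWithin_le_nhds hV, self_mem_nhdsWithin] with y hyV hyS
    by_contra hby
    push_neg at hby
    exact hyV ⟨y, ⟨hyS, hby⟩, rfl⟩
  · intro b hb
    have hcl' := hcl (-f) hfneg (-b)
    have hxU : (x : WeakDual ℝ X) ∈ (Subtype.val '' {y : Y | (y : WeakDual ℝ X) ∈ K ∧ (-f) y ≤ -b})ᶜ := by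
      rintro ⟨y, ⟨hyK, hyb⟩, hyx⟩
      have : y = x := Subtype.ext hyx
      rw [this] at hyb
      simp only [LinearMap.neg_apply, neg_le_neg_iff] at hyb
      exact absurd hyb (not_le.mpr hb)
    have hV : Subtype.val ⁻¹' (Subtype.val '' {y : Y | (y : WeakDual ℝ X) ∈ K ∧ (-f) y ≤ -b})ᶜ ∈ 𝓝 x :=
      (hcl'.isOpen_compl.preimage continuous_subtype_val).mem_nhds hxU
    filter_upwards [nhdsWithin_le_nhds hV, self_mem_nhdsWithin] with y hyV hyS
    by_contra hby
    push_neg at hby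
    exact hyV ⟨y, ⟨hyS, by simpa using hby⟩, rfl⟩
end

section
/- Let X be a real Banach space with property (E'), i.e., every convex, norm-bounded, w*-sequentially closed subset of X* is w*-closed, and let Y ⊆ X* be a w*-dense and norm-closed subspace. Then the following are equivalent: (a) every linear functional f : Y → ℝ whose restriction to each absolutely convex w*-compact subset of Y is w*-continuous is itself w*-continuous; (b) (Y, w*) has the Mazur property. -/
open Filter Topology

lemma seqCont_to_groth {X : Type*} [NormedAddCommGroup X] [NormedSpace ℝ X] [CompleteSpace X]
    (hE' : ∀ C : Set (WeakDual ℝ X), Convex ℝ C → (∃ M : ℝ, ∀ y ∈ C, dnorm X y ≤ M) →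
      (∀ (u : ℕ → WeakDual ℝ X) (z : WeakDual ℝ X),
        (∀ n, u n ∈ C) → Tendsto u atTop (𝓝 z) → z ∈ C) →
      IsClosed C)
    {Y : Submodule ℝ (WeakDual ℝ X)} (f : Y →ₗ[ℝ] ℝ) (hf : WStarSeqCont X f) :
    GrothendieckCond X f := by
  intro K hKY hKconv hKbal hKcpt
  have hKcl : IsClosed K := hKcpt.isClosed
  obtain ⟨M, hM⟩ : ∃ M, ∀ z ∈ K, dnorm X z ≤ M := by
    have hpt : ∀ x : X, ∃ C, ∀ k : K,
        ‖WeakDual.toStrongDual (k : WeakDual ℝ X) x‖ ≤ C := by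
      intro x
      obtain ⟨C, hC⟩ := hKcpt.exists_bound_of_continuousOn
        ((WeakDual.eval_continuous x).continuousOn)
      exact ⟨C, fun k => hC k k.2⟩
    obtain ⟨C, hC⟩ := banach_steinhaus
      (g := fun k : K => WeakDual.toStrongDual (k : WeakDual ℝ X)) hpt
    exact ⟨C, fun z hz => hC ⟨z, hz⟩⟩
  have key : ∀ (g : Y →ₗ[ℝ] ℝ), WStarSeqCont X g → ∀ r : ℝ,
      IsClosed (Subtype.val '' {q : Y | (q : WeakDual ℝ X) ∈ K ∧ r ≤ g q}) := by
    intro g hg r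
    apply hE'
    · rintro z₁ ⟨q₁, ⟨hq₁K, hq₁f⟩, rfl⟩ z₂ ⟨q₂, ⟨hq₂K, hq₂f⟩, rfl⟩ a b ha hb hab
      refine ⟨a • q₁ + b • q₂, ⟨?_, ?_⟩, by simp⟩
      · simpa using hKconv hq₁K hq₂K ha hb hab
      · have := add_le_add (mul_le_mul_of_nonneg_left hq₁f ha)
          (mul_le_mul_of_nonneg_left hq₂f hb)
        have hr : a * r + b * r = r := by rw [← add_mul, hab, one_mul]
        simp only [map_add, map_smul, smul_eq_mul]
        linarith
    · exact ⟨M, by rintro z ⟨q, ⟨hq, _⟩, rfl⟩; exact hM _ hq⟩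
    · intro v z hv hz
      have hvK : ∀ n, v n ∈ K := by
        intro n; obtain ⟨q', ⟨h, _⟩, hval⟩ := hv n; rw [← hval]; exact h
      have hzK : z ∈ K := hKcl.mem_of_tendsto hz (Eventually.of_forall hvK)
      set q : ℕ → Y := fun n => ⟨v n, hKY (hvK n)⟩ with hq
      have hgr : ∀ n, r ≤ g (q n) := by
        intro n; obtain ⟨q', ⟨h, hf'⟩, hval⟩ := hv n
        have : q' = q n := Subtype.ext hval
        rwa [this] at hf'
      have hlim := hg q ⟨z, hKY hzK⟩ hz
      exact ⟨⟨z, hKY hzK⟩, ⟨hzK, ge_of_tendsto' hlim hgr⟩, rfl⟩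
  intro p hp
  have hpK : (p : WeakDual ℝ X) ∈ K := hp
  rw [ContinuousWithinAt, Metric.tendsto_nhds]
  intro ε hε
  have hfneg : WStarSeqCont X (-f) := by
    intro u y h
    simpa using (hf u y h).neg
  have hC₁ := key f hf (f p + ε)
  have hC₂ := key (-f) hfneg (-(f p) + ε)
  set C₁ := Subtype.val '' {q : Y | (q : WeakDual ℝ X) ∈ K ∧ f p + ε ≤ f q}
  set C₂ := Subtype.val '' {q : Y | (q : WeakDual ℝ X) ∈ K ∧ -(f p) + ε ≤ (-f) q}
  have hop : IsOpen (C₁ ∪ C₂)ᶜ := (hC₁.union hC₂).isOpen_compl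
  have hpU : (p : WeakDual ℝ X) ∈ (C₁ ∪ C₂)ᶜ := by
    rintro (⟨q, ⟨_, hq⟩, hval⟩ | ⟨q, ⟨_, hq⟩, hval⟩) <;>
      · have hqp : q = p := Subtype.ext hval
        rw [hqp] at hq
        simp at hq
        linarith
  have hmem : Subtype.val ⁻¹' (C₁ ∪ C₂)ᶜ ∈ 𝓝 p :=
    (hop.preimage continuous_subtype_val).mem_nhds hpU
  filter_upwards [nhdsWithin_le_nhds hmem, self_mem_nhdsWithin] with q hqU hqS
  have h1 : ¬ (f p + ε ≤ f q) := fun h => hqU (Or.inl ⟨q, ⟨hqS, h⟩, rfl⟩)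
  have h2 : ¬ (-(f p) + ε ≤ (-f) q) := fun h => hqU (Or.inr ⟨q, ⟨hqS, h⟩, rfl⟩)
  push_neg at h1 h2
  simp only [LinearMap.neg_apply] at h2
  rw [Real.dist_eq, abs_sub_lt_iff]
  constructor <;> linarith

open NormedSpace

set_option maxHeartbeats 2000000 in
lemma groth_to_seqCont {X : Type*} [NormedAddCommGroup X] [NormedSpace ℝ X] [CompleteSpace X]
    {Y : Submodule ℝ (WeakDual ℝ X)} (hYc : NormClosed X Y)
    (f : Y →ₗ[ℝ] ℝ) (hf : GrothendieckCond X f) : WStarSeqCont X f := by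
  intro u y hu
  -- the sequence w 0 = y, w (n+1) = u n - y in Y, and its normed-dual version W
  set w : ℕ → Y := fun n => Nat.casesOn n y (fun k => u k - y) with hw
  set W : ℕ → StrongDual ℝ X := fun n => WeakDual.toStrongDual ((w n : WeakDual ℝ X)) with hW
  -- pointwise convergence to 0
  have hx : ∀ x : X, Tendsto (fun n => W n x) atTop (𝓝 0) := by
    intro x
    have h1 : Tendsto (fun n => (u n : WeakDual ℝ X) x) atTop
        (𝓝 ((y : WeakDual ℝ X) x)) := ((WeakDual.eval_continuous x).tendsto _).comp hu
    have h2 : Tendsto (fun n => W (n + 1) x) atTop (𝓝 0) := by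
      have : ∀ n, W (n + 1) x = (u n : WeakDual ℝ X) x - (y : WeakDual ℝ X) x :=
        fun n => rfl
      rw [funext this]
      simpa using h1.sub (tendsto_const_nhds (x := (y : WeakDual ℝ X) x))
    exact (tendsto_add_atTop_iff_nat 1).mp h2
  -- uniform bound
  obtain ⟨M, hM⟩ : ∃ M, ∀ n, ‖W n‖ ≤ M := by
    apply banach_steinhaus
    intro x
    obtain ⟨C, hC⟩ := (hx x).norm.bddAbove_range
    exact ⟨C, fun n => hC ⟨n, rfl⟩⟩
  have hM0 : 0 ≤ M := le_trans (norm_nonneg _) (hM 0)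
  -- the ℓ¹-ball of radius 2
  set B : Set (ℕ → ℝ) := {l | ∀ N, ∑ n ∈ Finset.range N, |l n| ≤ 2} with hB
  have habs : ∀ l ∈ B, Summable fun n => |l n| :=
    fun l hl => summable_of_sum_range_le (fun n => abs_nonneg _) hl
  have htsum_le : ∀ l ∈ B, (∑' n, |l n|) ≤ 2 :=
    fun l hl => Real.tsum_le_of_sum_range_le (fun n => abs_nonneg _) hl
  have hsumW : ∀ l : ℕ → ℝ, Summable (fun n => |l n|) → Summable fun n => l n • W n := by
    intro l hl
    apply Summable.of_norm
    apply Summable.of_nonneg_of_le (fun n => norm_nonneg _) (fun n => ?_) (hl.mul_right M)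
    rw [norm_smul]
    exact mul_le_mul_of_nonneg_left (hM n) (norm_nonneg _)
  set T : (ℕ → ℝ) → WeakDual ℝ X := fun l => StrongDual.toWeakDual (∑' n, l n • W n) with hT
  set K : Set (WeakDual ℝ X) := T '' B with hK
  -- linearity of the summation
  have hg_comb : ∀ (a b : ℝ) (l m : ℕ → ℝ), Summable (fun n => l n • W n) →
      Summable (fun n => m n • W n) →
      (∑' n, (a * l n + b * m n) • W n) = a • (∑' n, l n • W n) + b • (∑' n, m n • W n) := by
    intro a b l m hl hm
    have h1 : ∀ n, (a * l n + b * m n) • W n = a • (l n • W n) + b • (m n • W n) := by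
      intro n; rw [add_smul, smul_smul, smul_smul]
    rw [tsum_congr h1, Summable.tsum_add ((hl.const_smul a)) ((hm.const_smul b)),
      Summable.tsum_const_smul a hl, Summable.tsum_const_smul b hm]
  -- K ⊆ Y
  have hKY : K ⊆ (Y : Set (WeakDual ℝ X)) := by
    rintro _ ⟨l, hl, rfl⟩
    have hps : ∀ N : ℕ, (∑ n ∈ Finset.range N, l n • W n) ∈
        (fun z => WeakDual.toStrongDual z) '' (Y : Set (WeakDual ℝ X)) := by
      intro N
      refine ⟨((∑ n ∈ Finset.range N, l n • w n : Y) : WeakDual ℝ X),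
        Submodule.coe_mem _, ?_⟩
      have h1 : ((∑ n ∈ Finset.range N, l n • w n : Y) : WeakDual ℝ X)
          = ∑ n ∈ Finset.range N, l n • ((w n : Y) : WeakDual ℝ X) := by
        push_cast; rfl
      show WeakDual.toStrongDual _ = _
      rw [h1, map_sum]
      refine Finset.sum_congr rfl fun n _ => ?_
      rw [map_smul]
    have htend := (hsumW l (habs l hl)).hasSum.tendsto_sum_nat
    obtain ⟨q, hqY, hq⟩ := hYc.mem_of_tendsto htend (Eventually.of_forall hps)
    have : T l = q := by
      rw [hT]; dsimp only; rw [← hq]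
      exact (WeakDual.toStrongDual (E := X) (𝕜 := ℝ)).symm_apply_apply q
    rw [this]; exact hqY
  -- convexity
  have hconv : Convex ℝ K := by
    rintro _ ⟨l, hl, rfl⟩ _ ⟨m, hm, rfl⟩ a b ha hb hab
    refine ⟨fun n => a * l n + b * m n, ?_, ?_⟩
    · intro N
      calc ∑ n ∈ Finset.range N, |a * l n + b * m n|
          ≤ ∑ n ∈ Finset.range N, (a * |l n| + b * |m n|) := by
            apply Finset.sum_le_sum
            intro n _
            calc |a * l n + b * m n| ≤ |a * l n| + |b * m n| := abs_add_le _ _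
              _ = a * |l n| + b * |m n| := by
                  rw [abs_mul, abs_mul, abs_of_nonneg ha, abs_of_nonneg hb]
        _ = a * ∑ n ∈ Finset.range N, |l n| + b * ∑ n ∈ Finset.range N, |m n| := by
            rw [Finset.sum_add_distrib, Finset.mul_sum, Finset.mul_sum]
        _ ≤ a * 2 + b * 2 := add_le_add
            (mul_le_mul_of_nonneg_left (hl N) ha) (mul_le_mul_of_nonneg_left (hm N) hb)
        _ = 2 := by linarith
    · rw [hT]; dsimp only
      rw [hg_comb a b l m (hsumW l (habs l hl)) (hsumW m (habs m hm)), map_add,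
        map_smul, map_smul]
  -- balancedness
  have hbal : Balanced ℝ K := by
    intro a ha
    rintro _ ⟨_, ⟨l, hl, rfl⟩, rfl⟩
    refine ⟨fun n => a * l n, ?_, ?_⟩
    · intro N
      calc ∑ n ∈ Finset.range N, |a * l n| = ∑ n ∈ Finset.range N, |a| * |l n| := by
            simp [abs_mul]
        _ = |a| * ∑ n ∈ Finset.range N, |l n| := by rw [Finset.mul_sum]
        _ ≤ 1 * 2 := mul_le_mul ha (hl N) (Finset.sum_nonneg fun _ _ => abs_nonneg _)
            zero_le_one
        _ = 2 := one_mul 2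
    · rw [hT]; dsimp only
      have := hg_comb a 0 l l (hsumW l (habs l hl)) (hsumW l (habs l hl))
      simp only [zero_mul, add_zero, zero_smul] at this
      rw [this, map_smul]
  -- compactness
  have hBsub : B ⊆ Set.pi Set.univ fun _ : ℕ => Set.Icc (-2 : ℝ) 2 := by
    intro l hl n _
    have h1 : |l n| ≤ ∑ i ∈ Finset.range (n + 1), |l i| :=
      Finset.single_le_sum (f := fun i => |l i|) (fun i _ => abs_nonneg _)
        (Finset.self_mem_range_succ n)
    have := le_trans h1 (hl (n + 1))
    constructor <;> [linarith [neg_abs_le (l n)]; linarith [le_abs_self (l n)]]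
  have hBclosed : IsClosed B := by
    have : B = ⋂ N : ℕ, {l : ℕ → ℝ | ∑ n ∈ Finset.range N, |l n| ≤ 2} := by
      ext l; simp [hB, Set.mem_iInter]
    rw [this]
    exact isClosed_iInter fun N => isClosed_le
      (continuous_finset_sum _ fun i _ => (continuous_apply i).abs) continuous_const
  have hBcpt : IsCompact B :=
    (isCompact_univ_pi fun _ => isCompact_Icc).of_isClosed_subset hBclosed hBsub
  have hTcont : ContinuousOn T B := by
    rw [continuousOn_iff_continuous_restrict]
    apply WeakDual.continuous_of_continuous_eval
    intro x
    -- the evaluated function is a tsum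
    have happ : ∀ l : B, T (l : ℕ → ℝ) x = ∑' n, (l : ℕ → ℝ) n * W n x := by
      intro l
      have hs := (hsumW (l : ℕ → ℝ) (habs _ l.2)).hasSum
      have := (ContinuousLinearMap.apply ℝ ℝ x).hasSum hs
      simp only [ContinuousLinearMap.apply_apply, ContinuousLinearMap.smul_apply,
        smul_eq_mul] at this
      rw [hT]; dsimp only
      rw [show (StrongDual.toWeakDual (∑' n, (l : ℕ → ℝ) n • W n)) x
          = (∑' n, (l : ℕ → ℝ) n • W n) x from rfl]
      exact this.tsum_eq.symm
    set c : ℕ → ℝ := fun n => W n x with hc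
    have hgoal_eq : (Set.restrict B T) = fun l : B => T (l : ℕ → ℝ) := rfl
    have hcM : ∀ n, |c n| ≤ M * ‖x‖ := by
      intro n
      calc |c n| = ‖W n x‖ := rfl
        _ ≤ ‖W n‖ * ‖x‖ := (W n).le_opNorm x
        _ ≤ M * ‖x‖ := mul_le_mul_of_nonneg_right (hM n) (norm_nonneg x)
    have hsum_lc : ∀ l : B, Summable fun n => (l : ℕ → ℝ) n * c n := by
      intro l
      apply Summable.of_norm
      refine Summable.of_nonneg_of_le (fun n => norm_nonneg _) (fun n => ?_)
        ((habs _ l.2).mul_right (M * ‖x‖))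
      rw [norm_mul]
      exact mul_le_mul_of_nonneg_left (hcM n) (abs_nonneg _)
    have heq : (fun l : B => T (l : ℕ → ℝ) x) = fun l : B => ∑' n, (l : ℕ → ℝ) n * c n :=
      funext happ
    show Continuous fun l : B => T (l : ℕ → ℝ) x
    rw [heq]
    refine TendstoUniformly.continuous (p := (atTop : Filter ℕ))
      (F := fun (N : ℕ) (l : B) => ∑ n ∈ Finset.range N, (l : ℕ → ℝ) n * c n) ?_ ?_
    · rw [Metric.tendstoUniformly_iff]
      intro ε hε
      have hc0 : Tendsto c atTop (𝓝 0) := hx x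
      obtain ⟨N₀, hN₀⟩ := Metric.tendsto_atTop.mp hc0 (ε / 4) (by linarith)
      filter_upwards [eventually_ge_atTop N₀] with N hN l
      have hsl := hsum_lc l
      have habs_l := habs _ l.2
      have key : (∑' n, (l : ℕ → ℝ) n * c n) - ∑ n ∈ Finset.range N, (l : ℕ → ℝ) n * c n
          = ∑' n, (l : ℕ → ℝ) (n + N) * c (n + N) := by
        rw [← Summable.sum_add_tsum_nat_add N hsl]; ring
      rw [Real.dist_eq, key]
      have hsl_shift : Summable fun n => (l : ℕ → ℝ) (n + N) * c (n + N) :=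
        (summable_nat_add_iff (f := fun n => (l : ℕ → ℝ) n * c n) N).mpr hsl
      have habs_shift : Summable fun n => |(l : ℕ → ℝ) (n + N)| :=
        (summable_nat_add_iff (f := fun n => |(l : ℕ → ℝ) n|) N).mpr habs_l
      have hnorm_sum : Summable fun n => ‖(l : ℕ → ℝ) (n + N) * c (n + N)‖ := by
        refine Summable.of_nonneg_of_le (fun n => norm_nonneg _) (fun n => ?_)
          (habs_shift.mul_right (M * ‖x‖))
        rw [norm_mul]
        exact mul_le_mul_of_nonneg_left (hcM (n + N)) (abs_nonneg _)
      have h1 : |∑' n, (l : ℕ → ℝ) (n + N) * c (n + N)|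
          ≤ ∑' n, |(l : ℕ → ℝ) (n + N)| * |c (n + N)| := by
        have h := norm_tsum_le_tsum_norm hnorm_sum
        simpa [Real.norm_eq_abs, abs_mul] using h
      have h2 : (∑' n, |(l : ℕ → ℝ) (n + N)| * |c (n + N)|)
          ≤ ∑' n, |(l : ℕ → ℝ) (n + N)| * (ε / 4) := by
        have hcsmall : ∀ n : ℕ, |c (n + N)| ≤ ε / 4 := by
          intro n
          have h := hN₀ (n + N) (le_trans hN (Nat.le_add_left N n))
          rw [Real.dist_eq, sub_zero] at h
          exact h.le
        have hs2 : Summable fun n => |(l : ℕ → ℝ) (n + N)| * |c (n + N)| := by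
          refine Summable.of_nonneg_of_le (fun n => by positivity) (fun n => ?_)
            (habs_shift.mul_right (ε / 4))
          exact mul_le_mul_of_nonneg_left (hcsmall n) (abs_nonneg _)
        refine Summable.tsum_le_tsum (fun n => ?_) hs2 (habs_shift.mul_right (ε / 4))
        exact mul_le_mul_of_nonneg_left (hcsmall n) (abs_nonneg _)
      have h3 : (∑' n, |(l : ℕ → ℝ) (n + N)| * (ε / 4))
          = (∑' n, |(l : ℕ → ℝ) (n + N)|) * (ε / 4) := tsum_mul_right
      have h4 : (∑' n, |(l : ℕ → ℝ) (n + N)|) ≤ 2 := by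
        have hsplit := Summable.sum_add_tsum_nat_add (f := fun n => |(l : ℕ → ℝ) n|) N habs_l
        have hhead : 0 ≤ ∑ n ∈ Finset.range N, |(l : ℕ → ℝ) n| :=
          Finset.sum_nonneg fun n _ => abs_nonneg _
        have htot := htsum_le _ l.2
        linarith
      have h5 : (∑' n, |(l : ℕ → ℝ) (n + N)|) * (ε / 4) ≤ 2 * (ε / 4) := by
        apply mul_le_mul_of_nonneg_right h4; linarith
      calc |∑' n, (l : ℕ → ℝ) (n + N) * c (n + N)|
          ≤ ∑' n, |(l : ℕ → ℝ) (n + N)| * |c (n + N)| := h1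
        _ ≤ (∑' n, |(l : ℕ → ℝ) (n + N)|) * (ε / 4) := h3 ▸ h2
        _ ≤ 2 * (ε / 4) := h5
        _ < ε := by linarith
    · refine Frequently.of_forall fun N => ?_
      exact continuous_finset_sum _ fun i _ =>
        (((continuous_apply i).comp continuous_subtype_val).mul continuous_const)
  have hcpt : IsCompact K := hBcpt.image_of_continuousOn hTcont
  -- the basis sequences
  have hsingle : ∀ j : ℕ, HasSum (fun n => (if n = j then (1 : ℝ) else 0) • W n) (W j) := by
    intro j
    have h : (fun n => (if n = j then (1 : ℝ) else 0) • W n)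
        = fun n => if n = j then W j else 0 := by
      funext n; by_cases h : n = j <;> simp [h]
    rw [h]
    exact hasSum_ite_eq j (W j)
  have hsingle_sum : ∀ (j N : ℕ), (∑ i ∈ Finset.range N, |if i = j then (1 : ℝ) else 0|) ≤ 1 := by
    intro j N
    have h : ∀ i, |if i = j then (1 : ℝ) else 0| = if i = j then 1 else 0 := by
      intro i; split <;> simp
    rw [Finset.sum_congr rfl fun i _ => h i,
      Finset.sum_ite_eq' (Finset.range N) j fun _ => (1 : ℝ)]
    split <;> norm_num
  have hyK : (y : WeakDual ℝ X) ∈ K := by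
    refine ⟨fun i => if i = 0 then 1 else 0,
      fun N => le_trans (hsingle_sum 0 N) one_le_two, ?_⟩
    show StrongDual.toWeakDual _ = _
    rw [(hsingle 0).tsum_eq]
    exact LinearEquiv.apply_symm_apply StrongDual.toWeakDual _
  have huK : ∀ n : ℕ, ((u n : Y) : WeakDual ℝ X) ∈ K := by
    intro n
    refine ⟨fun i => (if i = 0 then 1 else 0) + (if i = n + 1 then 1 else 0), ?_, ?_⟩
    · intro N
      calc ∑ i ∈ Finset.range N, |(if i = 0 then (1 : ℝ) else 0) + (if i = n + 1 then 1 else 0)|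
          ≤ ∑ i ∈ Finset.range N,
            (|if i = 0 then (1 : ℝ) else 0| + |if i = n + 1 then (1 : ℝ) else 0|) :=
            Finset.sum_le_sum fun i _ => abs_add_le _ _
        _ = (∑ i ∈ Finset.range N, |if i = 0 then (1 : ℝ) else 0|)
            + ∑ i ∈ Finset.range N, |if i = n + 1 then (1 : ℝ) else 0| :=
            Finset.sum_add_distrib
        _ ≤ 1 + 1 := add_le_add (hsingle_sum 0 N) (hsingle_sum (n + 1) N)
        _ = 2 := by norm_num
    · show StrongDual.toWeakDual _ = _
      have hs : HasSum
          (fun i => ((if i = 0 then (1 : ℝ) else 0) + (if i = n + 1 then 1 else 0)) • W i)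
          (W 0 + W (n + 1)) := by
        have := (hsingle 0).add (hsingle (n + 1))
        simpa [add_smul] using this
      rw [hs.tsum_eq, map_add]
      have e0 : StrongDual.toWeakDual (W 0) = ((w 0 : Y) : WeakDual ℝ X) :=
        LinearEquiv.apply_symm_apply StrongDual.toWeakDual _
      have e1 : StrongDual.toWeakDual (W (n + 1)) = ((w (n + 1) : Y) : WeakDual ℝ X) :=
        LinearEquiv.apply_symm_apply StrongDual.toWeakDual _
      rw [e0, e1]
      show ((y : Y) : WeakDual ℝ X) + ((u n - y : Y) : WeakDual ℝ X) = _
      rw [AddSubgroupClass.coe_sub]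
      abel
  -- conclude
  have hcont := hf K hKY hconv hbal hcpt
  have hu' : Tendsto u atTop (𝓝 y) := Topology.IsEmbedding.subtypeVal.tendsto_nhds_iff.mpr hu
  have hu'' : Tendsto u atTop (𝓝[Subtype.val ⁻¹' K] y) :=
    tendsto_nhdsWithin_of_tendsto_nhds_of_eventually_within u hu'
      (Eventually.of_forall huK)
  exact (hcont y hyK).tendsto.comp hu''

/-- If `X` has property (E′) — every convex norm-bounded weak-star
sequentially closed subset of `X*` is weak-star closed — and `Y ⊆ X*` is weak-star dense
and norm-closed, then Grothendieck's completeness condition for `(X, μ(X,Y))` holds iff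
`(Y, w*)` has the Mazur property. -/
theorem statement7 (X : Type*) [NormedAddCommGroup X] [NormedSpace ℝ X] [CompleteSpace X]
    (hE' : ∀ C : Set (WeakDual ℝ X), Convex ℝ C → (∃ M : ℝ, ∀ y ∈ C, dnorm X y ≤ M) →
      (∀ (u : ℕ → WeakDual ℝ X) (z : WeakDual ℝ X),
        (∀ n, u n ∈ C) → Tendsto u atTop (𝓝 z) → z ∈ C) →
      IsClosed C)
    (Y : Submodule ℝ (WeakDual ℝ X)) (hYd : Dense (Y : Set (WeakDual ℝ X)))
    (hYc : NormClosed X Y) :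
    MackeyComplete X Y ↔ MazurProp X Y := by
  constructor
  · intro hMC f hfseq
    exact hMC f (seqCont_to_groth hE' f hfseq)
  · intro hMaz f hfg
    exact hMaz f (groth_to_seqCont hYc f hfg)
end

section
/- Let X be a real Banach space and Y ⊆ X* a w*-dense and norm-closed subspace. Then: (1) every linear functional f : Y → ℝ whose restriction to each absolutely convex w*-compact subset of Y is w*-continuous is w*-sequentially continuous; and (2) every w*-sequentially continuous linear functional f : Y → ℝ is norm-bounded, i.e., there is M ≥ 0 with |f(y*)| ≤ M·‖y*‖ for all y* ∈ Y. -/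
open Filter Topology

section Aux
open Filter Topology
variable {X : Type*} [NormedAddCommGroup X] [NormedSpace ℝ X] [CompleteSpace X]

set_option linter.unusedSectionVars false
set_option maxHeartbeats 1000000

theorem auxCompact (a : ℕ → StrongDual ℝ X) (ha1 : ∀ n, ‖a n‖ ≤ 1)
    (haev : ∀ x : X, Tendsto (fun n => a n x) atTop (𝓝 0)) :
    IsCompact ((fun t : ℕ → ℝ => (WeakDual.toStrongDual.symm (∑' n, t n • a n) : WeakDual ℝ X))
      '' {t : ℕ → ℝ | ∀ s : Finset ℕ, ∑ n ∈ s, |t n| ≤ 1}) := by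
  set T : Set (ℕ → ℝ) := {t | ∀ s : Finset ℕ, ∑ n ∈ s, |t n| ≤ 1} with hT
  set S : (ℕ → ℝ) → StrongDual ℝ X := fun t => ∑' n, t n • a n with hS
  set Φ : (ℕ → ℝ) → WeakDual ℝ X := fun t => WeakDual.toStrongDual.symm (S t) with hPhi
  have hTabs : ∀ t ∈ T, Summable (fun n => |t n|) ∧ ∑' n, |t n| ≤ 1 := by
    intro t ht
    have hs : Summable (fun n => |t n|) :=
      summable_of_sum_range_le (fun n => abs_nonneg _) (fun n => ht (Finset.range n))
    exact ⟨hs, Summable.tsum_le_of_sum_range_le hs (fun n => ht (Finset.range n))⟩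
  have hTsum : ∀ t ∈ T, Summable (fun n => t n • a n) := by
    intro t ht
    apply Summable.of_norm
    apply Summable.of_nonneg_of_le (fun n => norm_nonneg _) _ (hTabs t ht).1
    intro n
    rw [norm_smul, Real.norm_eq_abs]
    calc |t n| * ‖a n‖ ≤ |t n| * 1 :=
          mul_le_mul_of_nonneg_left (ha1 n) (abs_nonneg _)
      _ = |t n| := mul_one _
  have hTclosed : IsClosed T := by
    have hTeq : T = ⋂ s : Finset ℕ, {t : ℕ → ℝ | ∑ n ∈ s, |t n| ≤ 1} := by
      ext t; simp [hT, Set.mem_iInter]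
    rw [hTeq]
    exact isClosed_iInter (fun s => isClosed_le
      (continuous_finset_sum s (fun n _ => (continuous_apply n).abs)) continuous_const)
  have hTsub : T ⊆ Set.pi Set.univ (fun _ : ℕ => Set.Icc (-1:ℝ) 1) := by
    intro t ht n _
    have h1 := ht {n}
    simp only [Finset.sum_singleton] at h1
    exact Set.mem_Icc.mpr (abs_le.mp h1)
  have hTcomp : IsCompact T :=
    (isCompact_univ_pi (fun _ => isCompact_Icc)).of_isClosed_subset hTclosed hTsub
  have hPhiCont : ContinuousOn Φ T := by
    rw [continuousOn_iff_continuous_restrict]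
    apply WeakBilin.continuous_of_continuous_eval
    intro x
    -- the evaluation of Φ t at x as a tsum
    have heval : ∀ t ∈ T, (topDualPairing ℝ X) (WeakDual.toStrongDual.symm (S t)) x
        = ∑' n, t n * a n x := by
      intro t ht
      have h1 : (topDualPairing ℝ X) (WeakDual.toStrongDual.symm (S t)) x = (S t) x := rfl
      rw [h1, hS]
      simp only
      show ((ContinuousLinearMap.apply ℝ ℝ) x) (∑' (n : ℕ), t n • a n) = _
      rw [ContinuousLinearMap.map_tsum (ContinuousLinearMap.apply ℝ ℝ x) (hTsum t ht)]
      exact tsum_congr (fun n => by simp)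
    have hrestr : (fun tt : T => (topDualPairing ℝ X) (T.restrict Φ tt) x)
        = fun tt : T => ∑' n, (tt : ℕ → ℝ) n * a n x := by
      funext tt
      exact heval tt.1 tt.2
    refine (?_ : Continuous (fun tt : T => ∑' n, (tt : ℕ → ℝ) n * a n x)).congr
      (fun tt => by exact (heval tt.1 tt.2).symm)
    -- uniform convergence of partial sums
    have hsum' : ∀ t ∈ T, Summable (fun n => t n * a n x) := by
      intro t ht
      apply Summable.of_norm
      apply Summable.of_nonneg_of_le (fun n => norm_nonneg _) _ (((hTabs t ht).1).mul_right ‖x‖)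
      intro n
      rw [Real.norm_eq_abs, abs_mul]
      have hax : |a n x| ≤ ‖x‖ := by
        calc |a n x| ≤ ‖a n‖ * ‖x‖ := (a n).le_opNorm x
          _ ≤ 1 * ‖x‖ := by gcongr; exact ha1 n
          _ = ‖x‖ := one_mul _
      exact mul_le_mul_of_nonneg_left hax (abs_nonneg _)
    apply TendstoUniformly.continuous (F := fun N (tt : T) =>
        ∑ n ∈ Finset.range N, (tt : ℕ → ℝ) n * a n x) (p := atTop)
    · rw [Metric.tendstoUniformly_iff]
      intro ε hε
      obtain ⟨N0, hN0⟩ := Metric.tendsto_atTop.mp (haev x) (ε/2) (half_pos hε)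
      filter_upwards [eventually_ge_atTop N0] with N hN tt
      obtain ⟨t, ht⟩ : ∃ t : ℕ → ℝ, t = (tt : ℕ → ℝ) := ⟨tt, rfl⟩
      rw [← ht]
      have htT : t ∈ T := ht ▸ tt.2
      have hsx := hsum' t htT
      have htail := Summable.sum_add_tsum_nat_add (f := fun n => t n * a n x) N hsx
      have habs : Summable (fun n => |t n|) := (hTabs t htT).1
      have habsN : Summable (fun n => |t (n + N)|) := (summable_nat_add_iff N).mpr habs
      have hsxN : Summable (fun n => t (n + N) * a (n + N) x) := (summable_nat_add_iff N).mpr hsx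
      rw [Real.dist_eq]
      have hdiff : (∑' n, t n * a n x) - ∑ n ∈ Finset.range N, t n * a n x
          = ∑' n, t (n + N) * a (n + N) x := by linarith [htail]
      rw [hdiff]
      have hbd : ∀ n : ℕ, |t (n + N) * a (n + N) x| ≤ |t (n + N)| * (ε/2) := by
        intro n
        rw [abs_mul]
        apply mul_le_mul_of_nonneg_left _ (abs_nonneg _)
        have := hN0 (n + N) (le_trans hN (Nat.le_add_left N n))
        rw [Real.dist_eq, sub_zero] at this
        exact this.le
      have hshift_le : ∑' n, |t (n + N)| ≤ 1 := by
        have h := Summable.sum_add_tsum_nat_add (f := fun n => |t n|) N habs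
        have hnn : 0 ≤ ∑ i ∈ Finset.range N, |t i| :=
          Finset.sum_nonneg (fun n _ => abs_nonneg _)
        have htot := (hTabs t htT).2
        linarith
      calc |∑' n, t (n + N) * a (n + N) x| ≤ ∑' n, |t (n + N) * a (n + N) x| := by
            have hns : Summable (fun n => ‖t (n + N) * a (n + N) x‖) := by
              simpa only [Real.norm_eq_abs] using hsxN.abs
            simpa only [Real.norm_eq_abs] using norm_tsum_le_tsum_norm hns
        _ ≤ ∑' n, |t (n + N)| * (ε/2) := Summable.tsum_le_tsum hbd (by
              apply Summable.of_nonneg_of_le (fun n => abs_nonneg _) hbd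
              exact habsN.mul_right _) (habsN.mul_right _)
        _ = (∑' n, |t (n + N)|) * (ε/2) := tsum_mul_right
        _ ≤ 1 * (ε/2) := by
            apply mul_le_mul_of_nonneg_right hshift_le (le_of_lt (half_pos hε))
        _ < ε := by linarith
    · apply Frequently.of_forall
      intro N
      exact continuous_finset_sum _ (fun n _ =>
        ((continuous_apply n).comp continuous_subtype_val).mul continuous_const)
  exact hTcomp.image_of_continuousOn hPhiCont

theorem part1 (Y : Submodule ℝ (WeakDual ℝ X))
    (hYc : IsClosed ((fun y => WeakDual.toStrongDual y) '' (Y : Set (WeakDual ℝ X))))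
    (f : Y →ₗ[ℝ] ℝ)
    (hG : ∀ K : Set (WeakDual ℝ X), K ⊆ (Y : Set (WeakDual ℝ X)) → Convex ℝ K → Balanced ℝ K →
      IsCompact K → ContinuousOn (fun y : Y => f y) (Subtype.val ⁻¹' K))
    (u : ℕ → Y) (y : Y)
    (hu : Tendsto (fun n => (u n : WeakDual ℝ X)) atTop (𝓝 (y : WeakDual ℝ X))) :
    Tendsto (fun n => f (u n)) atTop (𝓝 (f y)) := by
  -- the difference sequence
  set w : ℕ → Y := fun n => u n - y with hw
  have hw0 : Tendsto (fun n => (w n : WeakDual ℝ X)) atTop (𝓝 0) := by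
    have h' : Tendsto (fun _ : ℕ => (y : WeakDual ℝ X)) atTop (𝓝 (y : WeakDual ℝ X)) :=
      tendsto_const_nhds
    have := hu.sub h'
    simpa [hw] using this
  -- Banach–Steinhaus bound
  have hptwise : ∀ x : X, ∃ C, ∀ n, ‖(WeakDual.toStrongDual ((w n : WeakDual ℝ X))) x‖ ≤ C := by
    intro x
    have hx : Tendsto (fun n => ((w n : WeakDual ℝ X)) x) atTop (𝓝 ((0 : WeakDual ℝ X) x)) :=
      ((WeakBilin.eval_continuous _ x).tendsto _).comp hw0
    have hb := hx.norm.bddAbove_range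
    obtain ⟨C, hC⟩ := hb
    exact ⟨C, fun n => hC (Set.mem_range_self n)⟩
  obtain ⟨C, hC⟩ := banach_steinhaus hptwise
  set R : ℝ := max C 0 + 1 with hR
  have hRpos : 0 < R := by positivity
  have hbound : ∀ n, ‖WeakDual.toStrongDual ((w n : WeakDual ℝ X))‖ ≤ R := fun n =>
    (hC n).trans (by simp [hR]; nlinarith [le_max_left C (0:ℝ)])
  -- the normalized sequence
  set v : ℕ → Y := fun n => R⁻¹ • w n with hv
  set a : ℕ → StrongDual ℝ X := fun n => WeakDual.toStrongDual ((v n : WeakDual ℝ X)) with ha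
  have ha1 : ∀ n, ‖a n‖ ≤ 1 := by
    intro n
    have : a n = R⁻¹ • WeakDual.toStrongDual ((w n : WeakDual ℝ X)) := by
      simp [ha, hv, map_smul]
    rw [this, norm_smul, Real.norm_eq_abs, abs_of_pos (inv_pos.mpr hRpos)]
    rw [inv_mul_le_iff₀ hRpos, mul_one]
    exact hbound n
  have haz : Tendsto (fun n => a n) atTop (𝓝 0) → True := fun _ => trivial
  -- evaluations of a tend to zero
  have haev : ∀ x : X, Tendsto (fun n => a n x) atTop (𝓝 0) := by
    intro x
    have hx : Tendsto (fun n => ((w n : WeakDual ℝ X)) x) atTop (𝓝 ((0 : WeakDual ℝ X) x)) :=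
      ((WeakBilin.eval_continuous _ x).tendsto _).comp hw0
    have : Tendsto (fun n => R⁻¹ * ((w n : WeakDual ℝ X)) x) atTop (𝓝 (R⁻¹ * ((0 : WeakDual ℝ X) x))) :=
      hx.const_mul _
    simpa [ha, hv, show ((0 : WeakDual ℝ X)) x = 0 from rfl] using this
  -- the ℓ¹ "cube"
  set T : Set (ℕ → ℝ) := {t | ∀ s : Finset ℕ, ∑ n ∈ s, |t n| ≤ 1} with hT
  have hTabs : ∀ t ∈ T, Summable (fun n => |t n|) ∧ ∑' n, |t n| ≤ 1 := by
    intro t ht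
    have hs : Summable (fun n => |t n|) :=
      summable_of_sum_range_le (fun n => abs_nonneg _) (fun n => ht (Finset.range n))
    exact ⟨hs, Summable.tsum_le_of_sum_range_le hs (fun n => ht (Finset.range n))⟩
  have hTsum : ∀ t ∈ T, Summable (fun n => t n • a n) := by
    intro t ht
    apply Summable.of_norm
    apply Summable.of_nonneg_of_le (fun n => norm_nonneg _) _ (hTabs t ht).1
    intro n
    rw [norm_smul, Real.norm_eq_abs]
    calc |t n| * ‖a n‖ ≤ |t n| * 1 := by
          exact mul_le_mul_of_nonneg_left (ha1 n) (abs_nonneg _)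
      _ = |t n| := mul_one _
  -- the map into the dual
  set S : (ℕ → ℝ) → StrongDual ℝ X := fun t => ∑' n, t n • a n with hS
  set Φ : (ℕ → ℝ) → WeakDual ℝ X := fun t => WeakDual.toStrongDual.symm (S t) with hPhi
  set K : Set (WeakDual ℝ X) := Φ '' T with hK
  -- partial sums are in Y and converge in norm
  have hmemY : ∀ t ∈ T, Φ t ∈ (Y : Set (WeakDual ℝ X)) := by
    intro t ht
    have hsum := hTsum t ht
    have hps : Tendsto (fun N => ∑ n ∈ Finset.range N, t n • a n) atTop (𝓝 (S t)) :=
      hsum.hasSum.tendsto_sum_nat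
    have hmem : ∀ N, (∑ n ∈ Finset.range N, t n • a n) ∈
        ((fun z => WeakDual.toStrongDual z) '' (Y : Set (WeakDual ℝ X))) := by
      intro N
      refine ⟨∑ n ∈ Finset.range N, t n • ((v n : WeakDual ℝ X)), ?_, ?_⟩
      · exact Submodule.sum_mem Y (fun n _ => Submodule.smul_mem Y _ (v n).2)
      · simp [map_sum, map_smul, ha]
    obtain ⟨z, hzY, hzeq⟩ := hYc.mem_of_tendsto hps (Eventually.of_forall hmem)
    have hPhiz : Φ t = z := by
      rw [hPhi]
      simp only
      rw [← hzeq]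
      exact LinearEquiv.symm_apply_apply _ z
    rw [hPhiz]; exact hzY
  have hSmul : ∀ (c : ℝ) (t : ℕ → ℝ), t ∈ T → S (c • t) = c • S t := by
    intro c t ht
    rw [hS]
    simp only [Pi.smul_apply, smul_eq_mul]
    rw [show (fun n => (c * t n) • a n) = fun n => c • (t n • a n) by
      funext n; rw [smul_smul]]
    exact Summable.tsum_const_smul c (hTsum t ht)
  have hsmulT : ∀ (c : ℝ) (t : ℕ → ℝ), |c| ≤ 1 → t ∈ T → c • t ∈ T := by
    intro c t hc ht s
    have : ∑ n ∈ s, |(c • t) n| = |c| * ∑ n ∈ s, |t n| := by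
      rw [Finset.mul_sum]
      exact Finset.sum_congr rfl (fun n _ => by simp [abs_mul])
    rw [this]
    calc |c| * ∑ n ∈ s, |t n| ≤ 1 * 1 :=
          mul_le_mul hc (ht s) (Finset.sum_nonneg (fun n _ => abs_nonneg _)) zero_le_one
      _ = 1 := one_mul 1
  have hconv : Convex ℝ K := by
    rintro z1 ⟨t1, ht1, rfl⟩ z2 ⟨t2, ht2, rfl⟩ s1 s2 hs1 hs2 hs12
    refine ⟨s1 • t1 + s2 • t2, ?_, ?_⟩
    · intro s
      have he : ∀ n, |(s1 • t1 + s2 • t2) n| ≤ s1 * |t1 n| + s2 * |t2 n| := by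
        intro n
        simp only [Pi.add_apply, Pi.smul_apply, smul_eq_mul]
        calc |s1 * t1 n + s2 * t2 n| ≤ |s1 * t1 n| + |s2 * t2 n| := abs_add_le _ _
          _ = s1 * |t1 n| + s2 * |t2 n| := by
              rw [abs_mul, abs_mul, abs_of_nonneg hs1, abs_of_nonneg hs2]
      calc ∑ n ∈ s, |(s1 • t1 + s2 • t2) n| ≤ ∑ n ∈ s, (s1 * |t1 n| + s2 * |t2 n|) :=
            Finset.sum_le_sum (fun n _ => he n)
        _ = s1 * ∑ n ∈ s, |t1 n| + s2 * ∑ n ∈ s, |t2 n| := by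
            rw [Finset.sum_add_distrib, Finset.mul_sum, Finset.mul_sum]
        _ ≤ s1 * 1 + s2 * 1 := by
            have := ht1 s; have := ht2 s
            gcongr <;> assumption
        _ = 1 := by rw [mul_one, mul_one, hs12]
    · have hsum1 : Summable (fun n => (s1 • t1) n • a n) := by
        simpa [smul_smul] using (hTsum t1 ht1).const_smul s1
      have hsum2 : Summable (fun n => (s2 • t2) n • a n) := by
        simpa [smul_smul] using (hTsum t2 ht2).const_smul s2
      have hSadd : S (s1 • t1 + s2 • t2) = S (s1 • t1) + S (s2 • t2) := by
        rw [hS]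
        simp only [Pi.add_apply, add_smul]
        exact Summable.tsum_add hsum1 hsum2
      rw [hPhi]
      simp only
      rw [hSadd, hSmul s1 t1 ht1, hSmul s2 t2 ht2, map_add, map_smul, map_smul]
  have hbal : Balanced ℝ K := by
    intro c hc z hz
    obtain ⟨z0, hz0, rfl⟩ := Set.mem_smul_set.mp hz
    obtain ⟨t, ht, rfl⟩ := hz0
    refine ⟨c • t, hsmulT c t (by rwa [← Real.norm_eq_abs]) ht, ?_⟩
    rw [hPhi]
    simp only
    rw [hSmul c t ht, map_smul]
  have hcomp : IsCompact K := auxCompact a ha1 haev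
  have hcont := hG K (fun z hz => by obtain ⟨t, ht, rfl⟩ := hz; exact hmemY t ht) hconv hbal hcomp
  -- Φ of basis vectors
  have hsingleT : ∀ n : ℕ, Pi.single n (1:ℝ) ∈ T := by
    intro n s
    calc ∑ m ∈ s, |Pi.single n (1:ℝ) m| = ∑ m ∈ s, (if m = n then (1:ℝ) else 0) := by
          refine Finset.sum_congr rfl (fun m _ => ?_)
          by_cases h : m = n
          · subst h; simp
          · rw [Pi.single_eq_of_ne h]; simp [h]
      _ ≤ 1 := by rw [Finset.sum_ite_eq' s n (fun _ => (1:ℝ))]; split <;> norm_num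
  have hPhisingle : ∀ n : ℕ, Φ (Pi.single n (1:ℝ)) = (v n : WeakDual ℝ X) := by
    intro n
    have hSsingle : S (Pi.single n (1:ℝ)) = a n := by
      rw [hS]
      simp only
      rw [tsum_eq_single n (fun m hm => by rw [Pi.single_eq_of_ne hm, zero_smul])]
      simp
    rw [hPhi]
    simp only
    rw [hSsingle, ha]
    simp only
    exact LinearEquiv.symm_apply_apply _ _
  have hPhizero : Φ 0 = 0 := by
    rw [hPhi]
    simp only
    have : S 0 = 0 := by rw [hS]; simp
    rw [this, map_zero]
  have hzeroT : (0 : ℕ → ℝ) ∈ T := by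
    intro s; simp
  have hvK : ∀ n, (v n : WeakDual ℝ X) ∈ K := fun n =>
    hPhisingle n ▸ Set.mem_image_of_mem Φ (hsingleT n)
  have h0K : ((0 : Y) : WeakDual ℝ X) ∈ K := by
    have h00 : ((0 : Y) : WeakDual ℝ X) = Φ 0 := by rw [hPhizero]; rfl
    rw [h00]; exact Set.mem_image_of_mem Φ hzeroT
  have hvtends : Tendsto v atTop (𝓝 (0 : Y)) := by
    rw [tendsto_subtype_rng]
    have h3 : Tendsto (fun n => R⁻¹ • (w n : WeakDual ℝ X)) atTop (𝓝 (R⁻¹ • (0 : WeakDual ℝ X))) :=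
      hw0.const_smul _
    simpa [hv] using h3
  have hvin : Tendsto v atTop (𝓝[Subtype.val ⁻¹' K] (0 : Y)) :=
    tendsto_nhdsWithin_of_tendsto_nhds_of_eventually_within v hvtends
      (Eventually.of_forall (fun n => hvK n))
  have hfv : Tendsto (fun n => f (v n)) atTop (𝓝 (f 0)) :=
    (hcont 0 h0K).tendsto.comp hvin
  rw [map_zero] at hfv
  have hfv' : ∀ n, f (v n) = R⁻¹ * (f (u n) - f y) := by
    intro n
    simp [hv, hw, map_smul, map_sub, smul_eq_mul]
  have h4 := hfv.const_mul R
  rw [mul_zero] at h4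
  have h2 : Tendsto (fun n => f (u n) - f y) atTop (𝓝 0) := by
    refine h4.congr (fun n => ?_)
    rw [hfv' n, ← mul_assoc, mul_inv_cancel₀ hRpos.ne', one_mul]
  have h5 := h2.add (tendsto_const_nhds (x := f y))
  rw [zero_add] at h5
  exact h5.congr (fun n => by ring)

end Aux

section Aux2
open Filter Topology

theorem part2 (X : Type*) [NormedAddCommGroup X] [NormedSpace ℝ X] [CompleteSpace X]
    (Y : Submodule ℝ (WeakDual ℝ X)) (f : Y →ₗ[ℝ] ℝ)
    (hf : ∀ (u : ℕ → Y) (y : Y),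
      Tendsto (fun n => (u n : WeakDual ℝ X)) atTop (𝓝 (y : WeakDual ℝ X)) →
        Tendsto (fun n => f (u n)) atTop (𝓝 (f y))) :
    ∃ M : ℝ, 0 ≤ M ∧ ∀ y : Y, |f y| ≤ M * ‖WeakDual.toStrongDual (y : WeakDual ℝ X)‖ := by
  by_contra h
  push_neg at h
  have key : ∀ n : ℕ, ∃ z : Y, ((n : ℝ) + 1) * ‖WeakDual.toStrongDual (z : WeakDual ℝ X)‖ < |f z| := by
    intro n
    obtain ⟨z, hz⟩ := h ((n : ℝ) + 1) (by positivity)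
    exact ⟨z, hz⟩
  choose z hz using key
  have hpos : ∀ n, 0 < ‖WeakDual.toStrongDual ((z n : WeakDual ℝ X))‖ := by
    intro n
    rcases (norm_nonneg (WeakDual.toStrongDual ((z n : WeakDual ℝ X)))).lt_or_eq with h' | h'
    · exact h'
    · exfalso
      have hz0 : (z n : WeakDual ℝ X) = 0 :=
        (map_eq_zero_iff _ WeakDual.toStrongDual.injective).mp (norm_eq_zero.mp h'.symm)
      have hzn : z n = 0 := Subtype.ext hz0
      have h2 := hz n
      rw [hzn] at h2
      simp at h2
  have hnz : ∀ n : ℕ, 0 < (((n : ℝ) + 1) * ‖WeakDual.toStrongDual ((z n : WeakDual ℝ X))‖) := by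
    intro n
    exact mul_pos (by positivity) (hpos n)
  set yseq : ℕ → Y := fun n =>
    (((n : ℝ) + 1) * ‖WeakDual.toStrongDual ((z n : WeakDual ℝ X))‖)⁻¹ • z n with hyseq
  have hnorm : ∀ n, ‖WeakDual.toStrongDual ((yseq n : WeakDual ℝ X))‖ = ((n : ℝ) + 1)⁻¹ := by
    intro n
    have h1 : ((yseq n : WeakDual ℝ X)) = (((n : ℝ) + 1) * ‖WeakDual.toStrongDual ((z n : WeakDual ℝ X))‖)⁻¹ • (z n : WeakDual ℝ X) := rfl
    rw [h1, map_smul, norm_smul, Real.norm_eq_abs, abs_of_pos (inv_pos.mpr (hnz n))]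
    rw [mul_inv]
    have := (hpos n).ne'
    field_simp
  have htozero : Tendsto (fun n => WeakDual.toStrongDual ((yseq n : WeakDual ℝ X))) atTop (𝓝 0) := by
    rw [tendsto_zero_iff_norm_tendsto_zero]
    simp only [hnorm]
    exact tendsto_one_div_add_atTop_nhds_zero_nat.congr (by intro n; rw [one_div])
  have hwstar : Tendsto (fun n => ((yseq n : WeakDual ℝ X))) atTop (𝓝 (((0 : Y) : WeakDual ℝ X))) := by
    have := (NormedSpace.Dual.toWeakDual_continuous.tendsto 0).comp htozero
    exact this
  have hfseq := hf yseq 0 hwstar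
  rw [map_zero] at hfseq
  have hbig : ∀ n, 1 < |f (yseq n)| := by
    intro n
    have h1 : f (yseq n) = (((n : ℝ) + 1) * ‖WeakDual.toStrongDual ((z n : WeakDual ℝ X))‖)⁻¹ * f (z n) := by
      rw [hyseq]; simp [map_smul]
    rw [h1, abs_mul, abs_of_pos (inv_pos.mpr (hnz n))]
    rw [lt_inv_mul_iff₀ (hnz n), mul_one]
    exact hz n
  have habs := hfseq.abs
  rw [abs_zero] at habs
  obtain ⟨n, hn⟩ := (habs.eventually (eventually_lt_nhds (by norm_num : (0:ℝ) < 1))).exists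
  exact absurd (hbig n) (not_lt.mpr hn.le)

end Aux2

/-- For a weak-star dense and norm-closed subspace `Y ⊆ X*`:
(1) every linear functional on `Y` whose restriction to each absolutely convex weak-star
compact subset of `Y` is weak-star continuous is weak-star sequentially continuous; and
(2) every weak-star sequentially continuous linear functional on `Y` is norm-bounded. -/


theorem statement8 (X : Type*) [NormedAddCommGroup X] [NormedSpace ℝ X] [CompleteSpace X]
    (Y : Submodule ℝ (WeakDual ℝ X)) (hYd : Dense (Y : Set (WeakDual ℝ X)))
    (hYc : NormClosed X Y) :
    (∀ f : Y →ₗ[ℝ] ℝ, GrothendieckCond X f → WStarSeqCont X f) ∧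
    (∀ f : Y →ₗ[ℝ] ℝ, WStarSeqCont X f →
      ∃ M : ℝ, 0 ≤ M ∧ ∀ y : Y, |f y| ≤ M * dnorm X (y : WeakDual ℝ X)) := by
  constructor
  · intro f hG u y hu
    exact part1 Y hYc f hG u y hu
  · intro f hf
    exact part2 X Y f hf
end
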